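/- arXiv:1504.01206 — 3 statements merged into one kernel-verified Lean document; each statement's English description precedes it below -/
import Mathlib

section
/- For λ ∈ Γ_k with λ₁ ≥ ⋯ ≥ λₙ, there is a dimensional constant c₀ > 0 such that λ₁·σ_k^{11}(λ) ≥ c₀·σ_k(λ), where σ_k^{11}(λ) = σ_{k−1}(λ|1). -/
open Finset
open scoped Nat

variable {α : Type*} [DecidableEq α]

/-- sum over m-subsets of s of products -/
noncomputable def E (s : Finset α) (m : ℕ) (x : α → ℝ) : ℝ :=
  ∑ t ∈ Finset.powersetCard m s, ∏ i ∈ t, x i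

lemma E_zero (s : Finset α) (x : α → ℝ) : E s 0 x = 1 := by
  simp [E]

lemma E_of_card_lt {s : Finset α} {m : ℕ} (h : s.card < m) (x : α → ℝ) : E s m x = 0 := by
  simp [E, Finset.powersetCard_eq_empty.2 h]

lemma E_one (s : Finset α) (x : α → ℝ) : E s 1 x = ∑ i ∈ s, x i := by
  simp [E, Finset.powersetCard_one]

lemma E_top (s : Finset α) (x : α → ℝ) : E s s.card x = ∏ i ∈ s, x i := by
  simp [E, Finset.powersetCard_self]

lemma E_congr {s : Finset α} {x y : α → ℝ} (h : ∀ i ∈ s, x i = y i) (m : ℕ) :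
    E s m x = E s m y := by
  refine Finset.sum_congr rfl fun t ht => Finset.prod_congr rfl fun i hi => ?_
  exact h i ((Finset.mem_powersetCard.1 ht).1 hi)

lemma E_insert {a : α} {s : Finset α} (ha : a ∉ s) (m : ℕ) (x : α → ℝ) :
    E (insert a s) (m + 1) x = E s (m + 1) x + x a * E s m x := by
  rw [E, Finset.powersetCard_succ_insert ha]
  rw [Finset.sum_union]
  · congr 1
    rw [Finset.sum_image]
    · rw [E, Finset.mul_sum]
      refine Finset.sum_congr rfl fun t ht => ?_
      rw [Finset.prod_insert fun hat => ha ((Finset.mem_powersetCard.1 ht).1 hat)]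
    · intro t ht u hu htu
      have hat : a ∉ t := fun h' => ha ((Finset.mem_powersetCard.1 ht).1 h')
      have hau : a ∉ u := fun h' => ha ((Finset.mem_powersetCard.1 hu).1 h')
      have := congrArg (Finset.erase · a) htu
      simpa [Finset.erase_insert hat, Finset.erase_insert hau] using this
  · rw [Finset.disjoint_left]
    intro t ht htim
    obtain ⟨u, hu, rfl⟩ := Finset.mem_image.1 htim
    have : a ∈ s := (Finset.mem_powersetCard.1 ht).1 (Finset.mem_insert_self a u)
    exact ha this

lemma E_erase {j : α} {s : Finset α} (hj : j ∈ s) (m : ℕ) (x : α → ℝ) :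
    E s (m + 1) x = E (s.erase j) (m + 1) x + x j * E (s.erase j) m x := by
  have h := E_insert (Finset.notMem_erase j s) (s := s.erase j) m x
  rwa [Finset.insert_erase hj] at h

set_option linter.unusedSectionVars false

lemma E_two (s : Finset α) (x : α → ℝ) :
    E s 2 x * 2 = (∑ i ∈ s, x i) ^ 2 - ∑ i ∈ s, (x i) ^ 2 := by
  classical
  induction s using Finset.induction_on with
  | empty => simp [E_of_card_lt (show (∅ : Finset α).card < 2 by simp)]
  | @insert a s ha ih =>
    have h1 : E (insert a s) 2 x = E s 2 x + x a * E s 1 x := E_insert ha 1 x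
    rw [h1, Finset.sum_insert ha, Finset.sum_insert ha, E_one]
    ring_nf
    ring_nf at ih
    linarith [ih]

lemma E_dual {s : Finset α} {x : α → ℝ} (hx : ∀ i ∈ s, x i ≠ 0) {l : ℕ} (hl : l ≤ s.card) :
    E s l x = (∏ i ∈ s, x i) * E s (s.card - l) (fun i => (x i)⁻¹) := by
  rw [E, E, Finset.mul_sum]
  refine Finset.sum_nbij' (fun t => s \ t) (fun t => s \ t) ?_ ?_ ?_ ?_ ?_
  · intro t ht
    rw [Finset.mem_powersetCard] at ht ⊢
    exact ⟨Finset.sdiff_subset, by rw [Finset.card_sdiff_of_subset ht.1, ht.2]⟩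
  · intro t ht
    rw [Finset.mem_powersetCard] at ht ⊢
    refine ⟨Finset.sdiff_subset, ?_⟩
    rw [Finset.card_sdiff_of_subset ht.1, ht.2]
    omega
  · intro t ht
    rw [Finset.mem_powersetCard] at ht
    exact Finset.sdiff_sdiff_eq_self ht.1
  · intro t ht
    rw [Finset.mem_powersetCard] at ht
    exact Finset.sdiff_sdiff_eq_self ht.1
  · intro t ht
    rw [Finset.mem_powersetCard] at ht
    have hsub := ht.1
    rw [← Finset.prod_sdiff hsub]
    have : (∏ i ∈ s \ t, (x i)⁻¹) * ∏ i ∈ s \ t, x i = 1 := by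
      rw [← Finset.prod_mul_distrib]
      refine Finset.prod_eq_one fun i hi => ?_
      exact inv_mul_cancel₀ (hx i (Finset.mem_sdiff.1 hi).1)
    calc ∏ i ∈ t, x i = ((∏ i ∈ s \ t, (x i)⁻¹) * ∏ i ∈ s \ t, x i) * ∏ i ∈ t, x i := by
          rw [this, one_mul]
      _ = _ := by ring

lemma newton_top {s : Finset α} {x : α → ℝ} {j : ℕ} (hcard : s.card = j + 2) :
    E s j x * E s (j + 2) x * ((j + 2 : ℕ) : ℝ) ^ 2 ≤
      E s (j + 1) x ^ 2 * (((j + 2).choose 2 : ℕ) : ℝ) := by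
  have htop : E s (j + 2) x = ∏ i ∈ s, x i := by rw [← hcard, E_top]
  by_cases hz : ∃ i ∈ s, x i = 0
  · obtain ⟨i, hi, hxi⟩ := hz
    have : ∏ i ∈ s, x i = 0 := Finset.prod_eq_zero hi hxi
    rw [htop, this, mul_zero, zero_mul]
    positivity
  · push_neg at hz
    set y : α → ℝ := fun i => (x i)⁻¹ with hy
    have hd1 : E s (j + 1) x = (∏ i ∈ s, x i) * E s 1 y := by
      have := E_dual hz (l := j + 1) (by omega)
      rwa [hcard, show j + 2 - (j + 1) = 1 from by omega] at this
    have hd2 : E s j x = (∏ i ∈ s, x i) * E s 2 y := by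
      have := E_dual hz (l := j) (by omega)
      rwa [hcard, show j + 2 - j = 2 from by omega] at this
    have hCS : (∑ i ∈ s, y i) ^ 2 ≤ ((j + 2 : ℕ) : ℝ) * ∑ i ∈ s, (y i) ^ 2 := by
      have h := Finset.sum_mul_sq_le_sq_mul_sq s y (fun _ => (1 : ℝ))
      simp only [mul_one, one_pow] at h
      calc (∑ i ∈ s, y i) ^ 2 ≤ (∑ i ∈ s, y i ^ 2) * ∑ i ∈ s, (1:ℝ) := h
        _ = ((j + 2 : ℕ) : ℝ) * ∑ i ∈ s, (y i) ^ 2 := by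
            rw [Finset.sum_const, hcard]; push_cast; ring
    have h2 : E s 2 y * 2 = (∑ i ∈ s, y i) ^ 2 - ∑ i ∈ s, (y i) ^ 2 := E_two s y
    have hchooseN : ((j + 2).choose 2 : ℕ) * 2 = (j + 2) * (j + 1) := by
      rw [Nat.choose_two_right, show j + 2 - 1 = j + 1 from rfl]
      exact Nat.div_mul_cancel (mul_comm (j+1) (j+2) ▸ (Nat.even_mul_succ_self (j+1)).two_dvd)
    have hchoose : (((j + 2).choose 2 : ℕ) : ℝ) = ((j:ℝ)+2) * ((j:ℝ)+1) / 2 := by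
      have := congrArg (Nat.cast : ℕ → ℝ) hchooseN
      push_cast at this
      linarith
    rw [htop, hd1, hd2, hchoose]
    have key : E s 2 y * ((j + 2 : ℕ) : ℝ) ^ 2 ≤ (E s 1 y) ^ 2 * (((j:ℝ)+2) * ((j:ℝ)+1) / 2) := by
      rw [E_one]
      have hj2 : (0:ℝ) ≤ ((j + 2 : ℕ) : ℝ) := by positivity
      have h3 := mul_le_mul_of_nonneg_left hCS hj2
      push_cast at h3 hCS h2 ⊢
      nlinarith [h3, h2]
    nlinarith [sq_nonneg (∏ i ∈ s, x i), key, sq_nonneg ((∏ i ∈ s, x i) * E s 1 y)]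

lemma Multiset.esymm_zero' (R : Multiset ℝ) : R.esymm 0 = 1 := by
  simp [Multiset.esymm]

lemma esymm_eq_E (s : Finset α) (x : α → ℝ) (t : ℕ) :
    (s.val.map x).esymm t = E s t x := Finset.esymm_map_val x s t

lemma newton_top_multiset (R : Multiset ℝ) {j : ℕ} (hcard : Multiset.card R = j + 2) :
    R.esymm j * R.esymm (j + 2) * ((j + 2 : ℕ) : ℝ) ^ 2 ≤
      R.esymm (j + 1) ^ 2 * (((j + 2).choose 2 : ℕ) : ℝ) := by
  obtain ⟨l, rfl⟩ := Quotient.exists_rep R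
  have hl : (⟦l⟧ : Multiset ℝ) = (l : Multiset ℝ) := rfl
  rw [hl] at hcard ⊢
  have hlen : l.length = j + 2 := by simpa using hcard
  have huniv : ((Finset.univ : Finset (Fin l.length)).val.map l.get) = (l : Multiset ℝ) := by
    rw [Fin.univ_val_map]
    exact congrArg _ (List.ofFn_get l)
  have hE : ∀ t, (l : Multiset ℝ).esymm t = E (Finset.univ : Finset (Fin l.length)) t l.get := by
    intro t
    rw [← huniv, esymm_eq_E]
  have hcard' : (Finset.univ : Finset (Fin l.length)).card = j + 2 := by
    simp [hlen]
  rw [hE, hE, hE]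
  exact newton_top hcard'

open Polynomial in
lemma real_rooted_iterate (p : ℝ[X]) (hp : p ≠ 0)
    (hroots : Multiset.card p.roots = p.natDegree) (d : ℕ) (hd : d ≤ p.natDegree) :
    (derivative^[d] p) ≠ 0 ∧ (derivative^[d] p).natDegree = p.natDegree - d ∧
      Multiset.card (derivative^[d] p).roots = p.natDegree - d := by
  induction d with
  | zero => exact ⟨hp, by simp, by simpa using hroots⟩
  | succ d ih =>
    obtain ⟨h0, hdeg, hcard⟩ := ih (by omega)
    set q := derivative^[d] p with hq
    have hq1 : 0 < q.natDegree := by omega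
    have hdegq : (derivative q).degree = ((q.natDegree - 1 : ℕ) : WithBot ℕ) :=
      degree_derivative_eq q hq1
    have h0' : derivative q ≠ 0 := by
      intro h
      rw [h, degree_zero] at hdegq
      exact WithBot.bot_ne_coe hdegq
    have hdeg' : (derivative q).natDegree = p.natDegree - (d + 1) := by
      have := natDegree_eq_of_degree_eq_some hdegq
      omega
    have hub := card_roots' (derivative q)
    have hlb := card_roots_le_derivative q
    rw [Function.iterate_succ_apply', ← hq]
    exact ⟨h0', hdeg', by omega⟩

open Polynomial in
set_option maxHeartbeats 2000000 in
lemma newton_multiset (M : Multiset ℝ) {m : ℕ} (hm : 1 ≤ m) (hms : m + 1 ≤ Multiset.card M) :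
    M.esymm (m - 1) * M.esymm (m + 1) * (((Multiset.card M).choose m : ℕ) : ℝ) ^ 2 ≤
      M.esymm m ^ 2 * (((Multiset.card M).choose (m - 1) : ℕ) : ℝ) *
        (((Multiset.card M).choose (m + 1) : ℕ) : ℝ) := by
  obtain ⟨μ, rfl⟩ : ∃ μ, m = μ + 1 := ⟨m - 1, by omega⟩
  simp only [show μ + 1 + 1 = μ + 2 from rfl, show μ + 1 - 1 = μ from rfl]
  set N := Multiset.card M with hN
  obtain ⟨β, hNeq⟩ : ∃ β, N = μ + β + 2 := ⟨N - μ - 2, by omega⟩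
  set d : ℕ := β with hd
  have hdN : d = N - (μ + 2) := by omega
  set P : ℝ[X] := (M.map fun r => X - C r).prod with hP
  have hmonic : P.Monic := monic_multiset_prod_of_monic _ _ fun r _ => monic_X_sub_C r
  have hPne : P ≠ 0 := hmonic.ne_zero
  have hPdeg : P.natDegree = N := natDegree_multiset_prod_X_sub_C_eq_card M
  have hProots : P.roots = M := roots_multiset_prod_X_sub_C M
  have hcardroots : Multiset.card P.roots = P.natDegree := by rw [hProots, hPdeg]
  obtain ⟨hQ0, hQdeg, hQcard⟩ := real_rooted_iterate P hPne hcardroots d (by omega)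
  set Q := derivative^[d] P with hQ
  have hQdeg' : Q.natDegree = μ + 2 := by omega
  have hQcard' : Multiset.card Q.roots = μ + 2 := by omega
  have hsplit : Splits Q := splits_iff_card_roots.2 (by omega)
  have hfact : Q = C Q.leadingCoeff * (Q.roots.map fun a => X - C a).prod :=
    hsplit.eq_prod_roots
  set R := Q.roots with hR
  -- coefficient of Q at l, two ways
  have eqA : ∀ l, Q.coeff l = ((l + d).descFactorial d : ℝ) * P.coeff (l + d) := by
    intro l
    rw [hQ, coeff_iterate_derivative, nsmul_eq_mul]
  have eqB : ∀ l, l ≤ μ + 2 →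
      Q.coeff l = Q.leadingCoeff * ((-1) ^ (μ + 2 - l) * R.esymm (μ + 2 - l)) := by
    intro l hl
    conv_lhs => rw [hfact]
    rw [coeff_C_mul]
    congr 1
    have := Multiset.prod_X_sub_C_coeff R (k := l) (by omega)
    rwa [hQcard'] at this
  have eqP : ∀ l, l + d ≤ N →
      P.coeff (l + d) = (-1) ^ (N - (l + d)) * M.esymm (N - (l + d)) := by
    intro l hl
    exact Multiset.prod_X_sub_C_coeff M hl
  have hlc : Q.leadingCoeff = (N.descFactorial d : ℝ) := by
    rw [leadingCoeff, hQdeg', eqA (μ + 2)]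
    have h1 : μ + 2 + d = N := by omega
    rw [h1]
    rw [show P.coeff N = 1 by rw [← hPdeg]; exact hmonic.coeff_natDegree]
    ring
  have key : ∀ j, j ≤ μ + 2 →
      (N.descFactorial d : ℝ) * R.esymm j = (((N - j).descFactorial d : ℕ) : ℝ) * M.esymm j := by
    intro j hj
    have hl : μ + 2 - j ≤ μ + 2 := by omega
    have e1 := eqB (μ + 2 - j) hl
    have e2 := eqA (μ + 2 - j)
    have hld : μ + 2 - j + d = N - j := by omega
    have hNj : N - (μ + 2 - j + d) = j := by omega
    rw [e2, eqP _ (by omega), hNj, hlc, hld, show μ + 2 - (μ + 2 - j) = j from by omega] at e1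
    have hne : ((-1 : ℝ)) ^ j ≠ 0 := pow_ne_zero _ (by norm_num)
    have e1' : ((-1:ℝ)) ^ j * ((N.descFactorial d : ℝ) * R.esymm j) =
        ((-1:ℝ)) ^ j * ((((N - j).descFactorial d : ℕ) : ℝ) * M.esymm j) := by
      linear_combination -e1
    exact mul_left_cancel₀ hne e1'
  -- abbreviations
  set F0 : ℝ := ((N.descFactorial d : ℕ) : ℝ) with hF0
  set Fa : ℝ := (((N - μ).descFactorial d : ℕ) : ℝ) with hFa
  set Fb : ℝ := (((N - (μ+1)).descFactorial d : ℕ) : ℝ) with hFb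
  set Fc : ℝ := (((N - (μ+2)).descFactorial d : ℕ) : ℝ) with hFc
  have hdesc : ∀ a b : ℕ, b ≤ a → ((a.descFactorial b : ℕ) : ℝ) = (a ! : ℝ) / ((a - b)! : ℝ) := by
    intro a b h
    have h1 := Nat.factorial_mul_descFactorial h
    have h2 := congrArg (Nat.cast : ℕ → ℝ) h1
    push_cast at h2
    rw [eq_div_iff (by positivity : ((a - b)! : ℝ) ≠ 0)]
    linarith [h2]
  have htopN := newton_top_multiset R (j := μ) hQcard'
  have kμ := key μ (by omega)
  have kμ1 := key (μ + 1) (by omega)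
  have kμ2 := key (μ + 2) (by omega)
  have hF0pos : (0:ℝ) < F0 := by
    rw [hF0]
    have : N.descFactorial d ≠ 0 := by
      intro h
      rw [Nat.descFactorial_eq_zero_iff_lt] at h
      omega
    exact_mod_cast Nat.pos_of_ne_zero this
  have hFbpos : (0:ℝ) < Fb := by
    rw [hFb]
    have : (N - (μ+1)).descFactorial d ≠ 0 := by
      intro h
      rw [Nat.descFactorial_eq_zero_iff_lt] at h
      omega
    exact_mod_cast Nat.pos_of_ne_zero this
  set C22 : ℝ := (((μ + 2).choose 2 : ℕ) : ℝ) with hC22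
  have hC22pos : (0:ℝ) < C22 := by
    rw [hC22]
    have : 0 < (μ + 2).choose 2 := Nat.choose_pos (by omega)
    exact_mod_cast this
  have step : Fa * M.esymm μ * (Fc * M.esymm (μ + 2)) * ((μ + 2 : ℕ) : ℝ) ^ 2 ≤
      (Fb * M.esymm (μ + 1)) ^ 2 * C22 := by
    have h4 := mul_le_mul_of_nonneg_left htopN (by positivity : (0:ℝ) ≤ F0 ^ 2)
    calc Fa * M.esymm μ * (Fc * M.esymm (μ + 2)) * ((μ + 2 : ℕ) : ℝ) ^ 2
        = (F0 * R.esymm μ) * (F0 * R.esymm (μ + 2)) * ((μ + 2 : ℕ) : ℝ) ^ 2 := by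
          rw [kμ, kμ2]
      _ = F0 ^ 2 * (R.esymm μ * R.esymm (μ + 2) * ((μ + 2 : ℕ) : ℝ) ^ 2) := by ring
      _ ≤ F0 ^ 2 * (R.esymm (μ + 1) ^ 2 * C22) := h4
      _ = (F0 * R.esymm (μ + 1)) ^ 2 * C22 := by ring
      _ = (Fb * M.esymm (μ + 1)) ^ 2 * C22 := by rw [kμ1]
  -- the combinatorial identity
  have hID : ((N.choose (μ+1) : ℕ) : ℝ) ^ 2 * Fb ^ 2 * C22 =
      ((N.choose μ : ℕ) : ℝ) * ((N.choose (μ+2) : ℕ) : ℝ) * Fa * Fc * ((μ + 2 : ℕ) : ℝ) ^ 2 := by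
    rw [hFa, hFb, hFc, hC22,
      hdesc (N - μ) d (by omega), hdesc (N - (μ+1)) d (by omega), hdesc (N - (μ+2)) d (by omega),
      Nat.cast_choose ℝ (by omega : μ + 1 ≤ N), Nat.cast_choose ℝ (by omega : μ ≤ N),
      Nat.cast_choose ℝ (by omega : μ + 2 ≤ N), Nat.cast_choose ℝ (by omega : 2 ≤ μ + 2),
      show N - μ = d + 2 from by omega, show N - (μ+1) = d + 1 from by omega,
      show N - (μ+2) = d from by omega, show d + 2 - d = 2 from by omega,
      show d + 1 - d = 1 from by omega, show d - d = 0 from by omega,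
      show μ + 2 - 2 = μ from by omega]
    simp only [show μ + 2 = (μ+1)+1 from rfl, show d + 2 = (d+1)+1 from rfl,
      Nat.factorial_succ, Nat.factorial_zero, Nat.factorial_one]
    have h1 : (0:ℝ) < (N ! : ℝ) := by exact_mod_cast Nat.factorial_pos N
    have h2 : (0:ℝ) < (μ ! : ℝ) := by exact_mod_cast Nat.factorial_pos μ
    have h3 : (0:ℝ) < (d ! : ℝ) := by exact_mod_cast Nat.factorial_pos d
    push_cast
    field_simp
  -- conclude
  have hccpos : (0:ℝ) ≤ ((N.choose μ : ℕ) : ℝ) * ((N.choose (μ+2) : ℕ) : ℝ) := by positivity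
  have hpos2 : (0:ℝ) < Fb ^ 2 * C22 := by positivity
  refine le_of_mul_le_mul_right ?_ hpos2
  have h5 := mul_le_mul_of_nonneg_left step hccpos
  calc M.esymm μ * M.esymm (μ + 2) * ((N.choose (μ+1) : ℕ) : ℝ) ^ 2 * (Fb ^ 2 * C22)
      = (((N.choose μ : ℕ) : ℝ) * ((N.choose (μ+2) : ℕ) : ℝ)) *
          (Fa * M.esymm μ * (Fc * M.esymm (μ + 2)) * ((μ + 2 : ℕ) : ℝ) ^ 2) := by
        linear_combination (M.esymm μ * M.esymm (μ + 2)) * hID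
    _ ≤ (((N.choose μ : ℕ) : ℝ) * ((N.choose (μ+2) : ℕ) : ℝ)) *
          ((Fb * M.esymm (μ + 1)) ^ 2 * C22) := h5
    _ = M.esymm (μ + 1) ^ 2 * ((N.choose μ : ℕ) : ℝ) * ((N.choose (μ+2) : ℕ) : ℝ) *
          (Fb ^ 2 * C22) := by ring

lemma newton_E {s : Finset α} (x : α → ℝ) {m : ℕ} (hm : 1 ≤ m) (hms : m + 1 ≤ s.card) :
    E s (m - 1) x * E s (m + 1) x * ((s.card.choose m : ℕ) : ℝ) ^ 2 ≤
      E s m x ^ 2 * ((s.card.choose (m - 1) : ℕ) : ℝ) * ((s.card.choose (m + 1) : ℕ) : ℝ) := by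
  have hcard : Multiset.card (s.val.map x) = s.card := by
    rw [Multiset.card_map]; rfl
  have h := newton_multiset (s.val.map x) hm (by rwa [hcard])
  rwa [hcard, esymm_eq_E, esymm_eq_E, esymm_eq_E] at h

/-- positivity of sigma_m for 1 ≤ m ≤ k -/
def Pos (s : Finset α) (k : ℕ) (x : α → ℝ) : Prop := ∀ m, 1 ≤ m → m ≤ k → 0 < E s m x

lemma erase_pos {s : Finset α} {x : α → ℝ} {k : ℕ} (hpos : Pos s k x) {j : α} (hj : j ∈ s)
    (hxj : x j ≤ 0) : ∀ m, m ≤ k → 0 < E (s.erase j) m x ∧ E s m x ≤ E (s.erase j) m x ∨ m = 0 := by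
  intro m hm
  induction m with
  | zero => exact Or.inr rfl
  | succ m ihm =>
    left
    have hEe : E s (m+1) x = E (s.erase j) (m+1) x + x j * E (s.erase j) m x := E_erase hj m x
    have hEm : 0 < E (s.erase j) m x := by
      rcases ihm (by omega) with h | h
      · exact h.1
      · rw [h, E_zero]; norm_num
    have hs : 0 < E s (m+1) x := hpos (m+1) (by omega) hm
    constructor
    · nlinarith
    · nlinarith

lemma erase_pos' {s : Finset α} {x : α → ℝ} {k : ℕ} (hpos : Pos s k x) {j : α} (hj : j ∈ s)
    (hxj : x j ≤ 0) {m : ℕ} (hm1 : 1 ≤ m) (hm : m ≤ k) : 0 < E (s.erase j) m x := by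
  rcases erase_pos hpos hj hxj m hm with h | h
  · exact h.1
  · omega

noncomputable def pnorm (s : Finset α) (x : α → ℝ) (i : ℕ) : ℝ :=
  E s i x / ((s.card.choose i : ℕ) : ℝ)

lemma pnorm_zero (s : Finset α) (x : α → ℝ) : pnorm s x 0 = 1 := by
  simp [pnorm, E_zero]

lemma pnorm_pos {s : Finset α} {x : α → ℝ} {k : ℕ} (h : Pos s k x) (hk : k ≤ s.card)
    {i : ℕ} (hi : i ≤ k) : 0 < pnorm s x i := by
  rcases Nat.eq_zero_or_pos i with rfl | hi1
  · rw [pnorm_zero]; norm_num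
  · have h1 : 0 < E s i x := h i hi1 hi
    have h2 : 0 < ((s.card.choose i : ℕ) : ℝ) := by
      exact_mod_cast Nat.choose_pos (by omega)
    exact div_pos h1 h2

lemma pnorm_newton {s : Finset α} {x : α → ℝ} {k : ℕ} (h : Pos s k x) (hk : k ≤ s.card)
    {j : ℕ} (hj1 : 1 ≤ j) (hjk : j + 1 ≤ k) :
    pnorm s x (j+1) * pnorm s x (j-1) ≤ pnorm s x j ^ 2 := by
  have hN := newton_E (s := s) x (m := j) hj1 (by omega)
  have c1 : (0:ℝ) < ((s.card.choose (j-1) : ℕ) : ℝ) := by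
    exact_mod_cast Nat.choose_pos (by omega)
  have c2 : (0:ℝ) < ((s.card.choose j : ℕ) : ℝ) := by
    exact_mod_cast Nat.choose_pos (by omega)
  have c3 : (0:ℝ) < ((s.card.choose (j+1) : ℕ) : ℝ) := by
    exact_mod_cast Nat.choose_pos (by omega)
  rw [pnorm, pnorm, pnorm, div_mul_div_comm, div_pow, div_le_div_iff₀ (by positivity) (by positivity)]
  nlinarith [hN]

lemma pnorm_chain {s : Finset α} {x : α → ℝ} {k : ℕ} (h : Pos s k x) (hk : k ≤ s.card) :
    ∀ m, 1 ≤ m → m + 1 ≤ k → pnorm s x (m+1) ^ m ≤ pnorm s x m ^ (m+1) := by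
  intro m
  induction m with
  | zero => omega
  | succ m ihm =>
    intro _ hmk
    rcases Nat.eq_zero_or_pos m with rfl | hm1
    · -- base : p_2 ^ 1 ≤ p_1 ^ 2
      have hN := pnorm_newton h hk (j := 1) le_rfl (by omega)
      rw [pnorm_zero] at hN
      simpa using hN
    · have ih := ihm hm1 (by omega)
      have hN := pnorm_newton h hk (j := m+1) (by omega) (by omega)
      rw [show m + 1 - 1 = m from by omega] at hN
      have pm : 0 < pnorm s x m := pnorm_pos h hk (by omega)
      have pm1 : 0 < pnorm s x (m+1) := pnorm_pos h hk (by omega)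
      have pm2 : 0 < pnorm s x (m+2) := pnorm_pos h hk (by omega)
      -- p_{m+2} ≤ p_{m+1}^2 / p_m
      have h1 : pnorm s x (m+2) ≤ pnorm s x (m+1) ^ 2 / pnorm s x m := by
        rw [le_div_iff₀ pm]
        nlinarith [hN]
      have h2 : pnorm s x (m+2) ^ (m+1) ≤ (pnorm s x (m+1) ^ 2 / pnorm s x m) ^ (m+1) :=
        pow_le_pow_left₀ (le_of_lt pm2) h1 (m+1)
      have h3 : (pnorm s x (m+1) ^ 2 / pnorm s x m) ^ (m+1) =
          pnorm s x (m+1) ^ (2*(m+1)) / pnorm s x m ^ (m+1) := by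
        rw [div_pow, ← pow_mul]
      have h4 : pnorm s x (m+1) ^ (2*(m+1)) / pnorm s x m ^ (m+1) ≤
          pnorm s x (m+1) ^ (2*(m+1)) / pnorm s x (m+1) ^ m := by
        apply div_le_div_of_nonneg_left (by positivity) (by positivity) ih
      have h5 : pnorm s x (m+1) ^ (2*(m+1)) / pnorm s x (m+1) ^ m =
          pnorm s x (m+1) ^ (m+2) := by
        rw [eq_comm, eq_div_iff (by positivity), ← pow_add]
        congr 1
        omega
      calc pnorm s x (m+1+1) ^ (m+1) ≤ (pnorm s x (m+1) ^ 2 / pnorm s x m) ^ (m+1) := h2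
        _ = pnorm s x (m+1) ^ (2*(m+1)) / pnorm s x m ^ (m+1) := h3
        _ ≤ pnorm s x (m+1) ^ (2*(m+1)) / pnorm s x (m+1) ^ m := h4
        _ = pnorm s x (m+1) ^ (m+1+1) := h5

lemma pnorm_pow {s : Finset α} {x : α → ℝ} {k : ℕ} (h : Pos s k x) (hk : k ≤ s.card)
    {m : ℕ} (hm : 1 ≤ m) : ∀ j, m ≤ j → j ≤ k → pnorm s x j ^ m ≤ pnorm s x m ^ j := by
  intro j
  induction j with
  | zero => omega
  | succ j ihj =>
    intro hmj hjk
    rcases Nat.lt_or_ge m (j+1) with hlt | hge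
    · have ih := ihj (by omega) (by omega)
      have hchain := pnorm_chain h hk j (by omega) (by omega)
      have pj : 0 < pnorm s x j := pnorm_pos h hk (by omega)
      have pj1 : 0 < pnorm s x (j+1) := pnorm_pos h hk (by omega)
      have pmm : 0 < pnorm s x m := pnorm_pos h hk (by omega)
      -- (p_{j+1}^m)^j ≤ (p_m^{j+1})^j
      have hj1 : 1 ≤ j := by omega
      have big : (pnorm s x (j+1) ^ m) ^ j ≤ (pnorm s x m ^ (j+1)) ^ j := by
        calc (pnorm s x (j+1) ^ m) ^ j = (pnorm s x (j+1) ^ j) ^ m := by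
              rw [← pow_mul, ← pow_mul, Nat.mul_comm]
          _ ≤ (pnorm s x j ^ (j+1)) ^ m := by
              apply pow_le_pow_left₀ (by positivity) hchain
          _ = (pnorm s x j ^ m) ^ (j+1) := by
              rw [← pow_mul, ← pow_mul, Nat.mul_comm]
          _ ≤ (pnorm s x m ^ j) ^ (j+1) := by
              apply pow_le_pow_left₀ (by positivity) ih
          _ = (pnorm s x m ^ (j+1)) ^ j := by
              rw [← pow_mul, ← pow_mul, Nat.mul_comm]
      have := pow_le_pow_iff_left₀ (a := pnorm s x (j+1) ^ m) (b := pnorm s x m ^ (j+1))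
        (by positivity) (by positivity) (by omega : j ≠ 0)
      exact this.1 big
    · have : m = j + 1 := by omega
      subst this
      exact le_rfl

lemma pnorm_first {s : Finset α} {x : α → ℝ} {k : ℕ} (h : Pos s k x) (hk : k ≤ s.card) :
    ∀ j, 1 ≤ j → j ≤ k → pnorm s x j ≤ pnorm s x (j-1) * pnorm s x 1 := by
  intro j
  induction j with
  | zero => omega
  | succ j ihj =>
    intro _ hjk
    rcases Nat.eq_zero_or_pos j with rfl | hj1
    · simp [pnorm_zero]
    · have ih := ihj hj1 (by omega)
      have hN := pnorm_newton h hk (j := j) hj1 (by omega)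
      have p0 : 0 < pnorm s x (j-1) := pnorm_pos h hk (by omega)
      have p1 : 0 < pnorm s x 1 := pnorm_pos h hk (by omega)
      have pj : 0 < pnorm s x j := pnorm_pos h hk (by omega)
      have pj1 : 0 < pnorm s x (j+1) := pnorm_pos h hk (by omega)
      rw [show j + 1 - 1 = j from by omega]
      nlinarith [hN, ih, mul_le_mul_of_nonneg_left ih (le_of_lt pj)]

lemma F_full : ∀ (k : ℕ) (s : Finset α) (x : α → ℝ), Pos s k x → k ≤ s.card →
    ∀ j ∈ s, ∀ m, 1 ≤ m → m + 1 ≤ k → 0 < E (s.erase j) m x := by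
  intro k
  induction k using Nat.strong_induction_on with
  | _ k ih =>
  intro s x hpos hk j hj m hm1 hmk
  rcases Nat.lt_or_ge (m+1) k with hlt | hge
  · exact ih (m+1) hlt s x (fun i hi1 hik => hpos i hi1 (by omega)) (by omega) j hj m hm1 le_rfl
  · have hmk' : k = m + 1 := by omega
    subst hmk'
    rcases le_or_gt (x j) 0 with hxj | hxj
    · exact erase_pos' hpos hj hxj hm1 (by omega)
    · by_contra hcon
      push_neg at hcon
      set e := s.erase j with he
      have hc : ∀ i, 1 ≤ i → i ≤ m → 0 < E e (i-1) x := by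
        intro i hi1 him
        rcases Nat.eq_or_lt_of_le hi1 with h1 | h1
        · rw [← h1]
          rw [show (1:ℕ) - 1 = 0 from rfl, E_zero]
          norm_num
        · exact ih i (by omega) s x (fun l hl1 hlk => hpos l hl1 (by omega)) (by omega) j hj
            (i-1) (by omega) (by omega)
      have hEyt : ∀ t : ℝ, ∀ i : ℕ,
          E s (i+1) (Function.update x j (x j - t)) = E s (i+1) x - t * E e i x := by
        intro t i
        have h1 := E_erase (x := Function.update x j (x j - t)) hj i
        have h2 := E_erase (x := x) hj i
        have h3 : E e (i+1) (Function.update x j (x j - t)) = E e (i+1) x :=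
          E_congr (fun a ha => Function.update_of_ne (Finset.ne_of_mem_erase ha) _ x) _
        have h3' : E e i (Function.update x j (x j - t)) = E e i x :=
          E_congr (fun a ha => Function.update_of_ne (Finset.ne_of_mem_erase ha) _ x) _
        have h4 : Function.update x j (x j - t) j = x j - t := Function.update_self j _ x
        rw [← he] at h1 h2
        rw [h1, h2, h3, h3', h4]
        ring
      have hne : (Finset.Icc 1 m).Nonempty := ⟨1, by simp; omega⟩
      obtain ⟨i₀, hi₀mem, hi₀min⟩ :=
        Finset.exists_min_image (Finset.Icc 1 m) (fun i => E s i x / E e (i-1) x) hne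
      rw [Finset.mem_Icc] at hi₀mem
      obtain ⟨hi₀1, hi₀m⟩ := hi₀mem
      set ci := E e (i₀ - 1) x with hci
      have hcipos : 0 < ci := hc i₀ hi₀1 hi₀m
      set T := E s i₀ x / ci with hT
      have hTpos : 0 < T := div_pos (hpos i₀ hi₀1 (by omega)) hcipos
      set N := s.card with hN
      have hCkpos : (0:ℝ) < ((N.choose (m+1) : ℕ) : ℝ) := by
        exact_mod_cast Nat.choose_pos (by omega)
      set ρ : ℝ := E s (m+1) x / ((N.choose (m+1) : ℕ) : ℝ) with hρ
      have hρpos : 0 < ρ := div_pos (hpos (m+1) (by omega) le_rfl) hCkpos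
      set ε := ρ ^ i₀ with hε
      have hεpos : 0 < ε := by positivity
      have hCipos : (0:ℝ) < ((N.choose i₀ : ℕ) : ℝ) := by
        exact_mod_cast Nat.choose_pos (by omega)
      set δ := min (T/2) (((N.choose i₀ : ℕ) : ℝ) * min 1 ε / (2 * ci)) with hδ
      have hδpos : 0 < δ := by
        apply lt_min (by linarith)
        apply div_pos
        · apply mul_pos hCipos
          exact lt_min one_pos hεpos
        · linarith
      set t := T - δ with htdef
      have hδT : δ ≤ T / 2 := min_le_left _ _
      have ht0 : 0 ≤ t := by rw [htdef]; linarith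
      have htT : t < T := by rw [htdef]; linarith
      set y := Function.update x j (x j - t) with hy
      have hPosyt : Pos s (m+1) y := by
        intro i hi1 hik
        have hid := hEyt t (i-1)
        rw [show i - 1 + 1 = i from by omega] at hid
        rcases Nat.lt_or_ge i (m+1) with him | him
        · have hfi := hi₀min i (Finset.mem_Icc.2 ⟨hi1, by omega⟩)
          have hcip : 0 < E e (i-1) x := hc i hi1 (by omega)
          have hlt : t * E e (i-1) x < E s i x := by
            have h5 : t < E s i x / E e (i-1) x := lt_of_lt_of_le htT hfi
            rw [lt_div_iff₀ hcip] at h5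
            linarith
          rw [hy, hid]
          linarith
        · have hieq : i = m + 1 := by omega
          subst hieq
          rw [hy, hid]
          rw [show m + 1 - 1 = m from by omega]
          have : t * E e m x ≤ 0 := mul_nonpos_of_nonneg_of_nonpos ht0 hcon
          have := hpos (m+1) (by omega) le_rfl
          linarith
      have hQ := pnorm_pow (x := y) hPosyt hk hi₀1 (m+1) (by omega) le_rfl
      -- compute pnorm s y i₀
      have hEi₀x : E s i₀ x = T * ci := by
        rw [hT]
        field_simp
      have hEi₀y : E s i₀ y = δ * ci := by
        have hid := hEyt t (i₀-1)
        rw [show i₀ - 1 + 1 = i₀ from by omega] at hid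
        rw [hy, hid, ← hci, hEi₀x, htdef]
        ring
      have hpyi₀ : pnorm s y i₀ = δ * ci / ((N.choose i₀ : ℕ) : ℝ) := by
        rw [pnorm, hEi₀y, ← hN]
      have ha1 : pnorm s y i₀ ≤ min 1 ε / 2 := by
        rw [hpyi₀, div_le_div_iff₀ hCipos (by norm_num : (0:ℝ) < 2)]
        have hδ2 : δ ≤ ((N.choose i₀ : ℕ) : ℝ) * min 1 ε / (2 * ci) := min_le_right _ _
        rw [le_div_iff₀ (by positivity : (0:ℝ) < 2 * ci)] at hδ2
        nlinarith [hδ2]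
      have hnum : E s (m+1) x ≤ E s (m+1) y := by
        have hid := hEyt t m
        rw [hy, hid]
        have : t * E e m x ≤ 0 := mul_nonpos_of_nonneg_of_nonpos ht0 hcon
        linarith
      have hρle : ρ ≤ pnorm s y (m+1) := by
        rw [hρ, pnorm, ← hN]
        exact (div_le_div_iff_of_pos_right hCkpos).2 hnum
      have hfin1 : ε ≤ pnorm s y (m+1) ^ i₀ := by
        rw [hε]
        exact pow_le_pow_left₀ (le_of_lt hρpos) hρle i₀
      have hy0 : 0 ≤ pnorm s y i₀ := le_of_lt (pnorm_pos hPosyt hk (by omega))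
      have ha2 : pnorm s y i₀ ≤ 1 := by
        have h6 := min_le_left (1:ℝ) ε
        linarith
      have hfin3 : pnorm s y i₀ ^ (m+1) ≤ pnorm s y i₀ :=
        pow_le_of_le_one hy0 ha2 (by omega)
      have h7 := min_le_right (1:ℝ) ε
      linarith [hfin1, hQ, hfin3, ha1]

/-- The `m`-th elementary symmetric polynomial of `x : Fin n → ℝ`. -/
noncomputable def esymm (n m : ℕ) (x : Fin n → ℝ) : ℝ :=
  ∑ s ∈ Finset.powersetCard m (Finset.univ : Finset (Fin n)), ∏ i ∈ s, x i

/-- The `m`-th elementary symmetric polynomial of the entries of `x` with indices in `s`. -/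
noncomputable def esymmRes (n : ℕ) (s : Finset (Fin n)) (m : ℕ) (x : Fin n → ℝ) : ℝ :=
  ∑ t ∈ Finset.powersetCard m s, ∏ i ∈ t, x i

theorem stmt14 (n k : ℕ) (hk : 1 ≤ k) (hkn : k ≤ n) :
    ∃ c₀ : ℝ, 0 < c₀ ∧
      ∀ lam : Fin n → ℝ,
        (∀ m, 1 ≤ m → m ≤ k → 0 < esymm n m lam) →
        (∀ i j : Fin n, i ≤ j → lam j ≤ lam i) →
        lam ⟨0, by omega⟩ * esymmRes n ({(⟨0, by omega⟩ : Fin n)} : Finset (Fin n))ᶜ (k - 1) lam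
          ≥ c₀ * esymm n k lam := by
  refine ⟨1 / ((n : ℝ) + 1), by positivity, ?_⟩
  intro lam hΓ hdec
  set j0 : Fin n := ⟨0, by omega⟩ with hj0
  set e : Finset (Fin n) := (Finset.univ : Finset (Fin n)).erase j0 with he
  have hcompl : ({j0} : Finset (Fin n))ᶜ = e := by
    rw [he, Finset.compl_eq_univ_sdiff, Finset.erase_eq]
  have hgoal1 : esymmRes n ({j0} : Finset (Fin n))ᶜ (k - 1) lam = E e (k-1) lam := by
    rw [hcompl]; rfl
  have hgoal2 : esymm n k lam = E Finset.univ k lam := rfl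
  rw [ge_iff_le, hgoal1, hgoal2]
  have hpos : Pos Finset.univ k lam := fun m h1 h2 => hΓ m h1 h2
  have hcardu : (Finset.univ : Finset (Fin n)).card = n := by
    rw [Finset.card_univ, Fintype.card_fin]
  have hmax : ∀ i : Fin n, lam i ≤ lam j0 := by
    intro i
    exact hdec j0 i (by simp [hj0, Fin.le_def])
  have hn1 : (1:ℝ) ≤ (n:ℝ) := by exact_mod_cast (by omega : 1 ≤ n)
  have hlam1 : 0 < lam j0 := by
    have hσ1 : 0 < E Finset.univ 1 lam := hpos 1 le_rfl hk
    rw [E_one] at hσ1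
    have hsum : ∑ i, lam i ≤ (n:ℝ) * lam j0 := by
      calc ∑ i, lam i ≤ ∑ _i : Fin n, lam j0 := Finset.sum_le_sum (fun i _ => hmax i)
        _ = (n:ℝ) * lam j0 := by
            rw [Finset.sum_const, hcardu, nsmul_eq_mul]
    nlinarith [hσ1, hsum]
  have hsplit : E Finset.univ k lam = E e k lam + lam j0 * E e (k-1) lam := by
    have h := E_erase (Finset.mem_univ j0) (k-1) lam
    rwa [show k - 1 + 1 = k from by omega] at h
  have hσk : 0 < E Finset.univ k lam := hpos k hk le_rfl
  rcases le_or_gt (E e k lam) 0 with hcase | hcase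
  · -- trivial case
    have h1 : E Finset.univ k lam ≤ lam j0 * E e (k-1) lam := by linarith [hsplit]
    have h2 : 1 / ((n:ℝ) + 1) * E Finset.univ k lam ≤ E Finset.univ k lam := by
      have h3 : 1 / ((n:ℝ)+1) ≤ 1 := by
        rw [div_le_one (by linarith)]
        linarith
      nlinarith [hσk, h3]
    linarith
  · -- main case
    have hkcard : k ≤ e.card := by
      by_contra hlt
      push_neg at hlt
      rw [E_of_card_lt hlt] at hcase
      exact lt_irrefl 0 hcase
    have hcard_e : e.card = n - 1 := by
      rw [he, Finset.card_erase_of_mem (Finset.mem_univ j0), hcardu]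
    have hPos_e : Pos e k lam := by
      intro m h1 h2
      rcases Nat.eq_or_lt_of_le h2 with heq | hlt
      · rwa [heq]
      · exact F_full k Finset.univ lam hpos (by omega) j0 (Finset.mem_univ j0) m h1 (by omega)
    have hmac := pnorm_first hPos_e hkcard k hk le_rfl
    set N' := e.card with hN'
    have hN'pos : 0 < N' := by omega
    have hCkpos : (0:ℝ) < ((N'.choose k : ℕ) : ℝ) := by
      exact_mod_cast Nat.choose_pos hkcard
    have hCk1pos : (0:ℝ) < ((N'.choose (k-1) : ℕ) : ℝ) := by
      exact_mod_cast Nat.choose_pos (by omega)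
    have hp1 : pnorm e lam 1 ≤ lam j0 := by
      rw [pnorm, E_one, Nat.choose_one_right]
      rw [div_le_iff₀ (by exact_mod_cast hN'pos)]
      calc ∑ i ∈ e, lam i ≤ ∑ _i ∈ e, lam j0 :=
            Finset.sum_le_sum (fun i _ => hmax i)
        _ = lam j0 * (N' : ℝ) := by
            rw [Finset.sum_const, nsmul_eq_mul]; ring
    have pk1pos : 0 < pnorm e lam (k-1) := pnorm_pos hPos_e hkcard (by omega)
    have hEk : E e k lam = pnorm e lam k * ((N'.choose k : ℕ) : ℝ) := by
      rw [pnorm, ← hN']; field_simp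
    have hEk1 : E e (k-1) lam = pnorm e lam (k-1) * ((N'.choose (k-1) : ℕ) : ℝ) := by
      rw [pnorm, ← hN']; field_simp
    have hchooseN : N'.choose k ≤ N'.choose (k-1) * n := by
      have h1 : N'.choose k * k = N'.choose (k-1) * (N' - (k-1)) := by
        have h0 := Nat.choose_succ_right_eq N' (k-1)
        rwa [show k - 1 + 1 = k from by omega] at h0
      calc N'.choose k ≤ N'.choose k * k := Nat.le_mul_of_pos_right _ (by omega)
        _ = N'.choose (k-1) * (N' - (k-1)) := h1
        _ ≤ N'.choose (k-1) * n := Nat.mul_le_mul_left _ (by omega)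
    have hchoosele : ((N'.choose k : ℕ) : ℝ) ≤ ((N'.choose (k-1) : ℕ) : ℝ) * (n:ℝ) := by
      exact_mod_cast hchooseN
    have step2 : E e k lam ≤ (n:ℝ) * (lam j0 * E e (k-1) lam) := by
      rw [hEk, hEk1]
      calc pnorm e lam k * ((N'.choose k : ℕ) : ℝ)
          ≤ (pnorm e lam (k-1) * pnorm e lam 1) * ((N'.choose k : ℕ) : ℝ) :=
            mul_le_mul_of_nonneg_right hmac (le_of_lt hCkpos)
        _ ≤ (pnorm e lam (k-1) * lam j0) * ((N'.choose k : ℕ) : ℝ) := by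
            apply mul_le_mul_of_nonneg_right _ (le_of_lt hCkpos)
            exact mul_le_mul_of_nonneg_left hp1 (le_of_lt pk1pos)
        _ ≤ (pnorm e lam (k-1) * lam j0) * (((N'.choose (k-1) : ℕ) : ℝ) * (n:ℝ)) := by
            apply mul_le_mul_of_nonneg_left hchoosele
            positivity
        _ = (n:ℝ) * (lam j0 * (pnorm e lam (k-1) * ((N'.choose (k-1) : ℕ) : ℝ))) := by ring
    have hfinal : E Finset.univ k lam ≤ ((n:ℝ) + 1) * (lam j0 * E e (k-1) lam) := by
      rw [hsplit]
      linarith [step2]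
    rw [div_mul_eq_mul_div, div_le_iff₀ (by linarith : (0:ℝ) < (n:ℝ) + 1)]
    nlinarith [hfinal, hσk]
end

section
/- Newton–Maclaurin consequence: for λ ∈ Γ_k ⊂ ℝⁿ with k ≥ 2, σ_{k−1}(λ) ≥ c(n,k) · σ₁(λ)^{1/(k−1)} · σ_k(λ)^{(k−2)/(k−1)} for some positive constant c(n,k) depending only on n and k. -/
open Multiset Polynomial in
lemma ms_esymm_zero (s : Multiset ℝ) : s.esymm 0 = 1 := by
  simp [Multiset.esymm, Multiset.powersetCard_zero_left]

open Multiset in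
lemma ms_esymm_one (s : Multiset ℝ) : s.esymm 1 = s.sum := by
  simp [Multiset.esymm, Multiset.powersetCard_one, Multiset.map_map, Function.comp_def]

open Multiset in
lemma ms_esymm_cons (a : ℝ) (s : Multiset ℝ) (j : ℕ) :
    (a ::ₘ s).esymm (j+1) = s.esymm (j+1) + a * s.esymm j := by
  simp only [Multiset.esymm, Multiset.powersetCard_cons, Multiset.map_add, Multiset.sum_add,
    Multiset.map_map, Function.comp_def, Multiset.prod_cons]
  rw [Multiset.sum_map_mul_left]

open Multiset in
lemma ms_esymm_of_lt (s : Multiset ℝ) {j : ℕ} (h : Multiset.card s < j) : s.esymm j = 0 := by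
  simp [Multiset.esymm, Multiset.powersetCard_eq_empty _ h]

open Multiset in
lemma ms_esymm_card (s : Multiset ℝ) : s.esymm (Multiset.card s) = s.prod := by
  induction s using Multiset.induction with
  | empty => simp [ms_esymm_zero]
  | cons a s ih =>
    rw [Multiset.card_cons, ms_esymm_cons, ms_esymm_of_lt s (by omega), ih,
      Multiset.prod_cons, zero_add]

open Multiset in
lemma ms_sq_sum (s : Multiset ℝ) :
    s.sum ^ 2 ≤ (Multiset.card s : ℝ) * (s.map (fun x => x ^ 2)).sum := by
  induction s using Multiset.induction with
  | empty => simp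
  | cons a s ih =>
    have hQ : (0:ℝ) ≤ (s.map (fun x => x ^ 2)).sum := by
      apply Multiset.sum_nonneg
      intro x hx
      obtain ⟨y, _, rfl⟩ := Multiset.mem_map.mp hx
      positivity
    rcases eq_or_ne s 0 with rfl | hs
    · simp
    · have hc : (1:ℝ) ≤ (Multiset.card s : ℝ) := by
        have := Multiset.card_pos.mpr hs
        exact_mod_cast this
      rw [Multiset.sum_cons, Multiset.map_cons, Multiset.sum_cons, Multiset.card_cons]
      push_cast
      nlinarith [sq_nonneg ((Multiset.card s : ℝ) * a - s.sum), ih, hQ,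
        mul_le_mul_of_nonneg_left ih (by linarith : (0:ℝ) ≤ 1)]

open Multiset in
lemma ms_esymm_two (s : Multiset ℝ) :
    2 * s.esymm 2 = s.sum ^ 2 - (s.map (fun x => x ^ 2)).sum := by
  induction s using Multiset.induction with
  | empty =>
    rw [ms_esymm_of_lt (0 : Multiset ℝ) (by simp : Multiset.card (0:Multiset ℝ) < 2)]
    simp
  | cons a s ih =>
    have h := ms_esymm_cons a s 1
    rw [show (1:ℕ)+1 = 2 from rfl] at h
    rw [h, ms_esymm_one, Multiset.sum_cons, Multiset.map_cons, Multiset.sum_cons]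
    ring_nf
    ring_nf at ih
    linarith [ih]

open Multiset in
lemma newton_base (s : Multiset ℝ) :
    (Multiset.card s : ℝ) ^ 2 * s.esymm 2
      ≤ ((Multiset.card s).choose 2 : ℝ) * s.esymm 1 ^ 2 := by
  have h1 := ms_sq_sum s
  have h2 := ms_esymm_two s
  rw [ms_esymm_one, Nat.cast_choose_two]
  have hn : (0:ℝ) ≤ (Multiset.card s : ℝ) := by positivity
  nlinarith [mul_le_mul_of_nonneg_left h1 hn]
open Multiset in
lemma ms_esymm_inv (s : Multiset ℝ) (h0 : (0:ℝ) ∉ s) :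
    ∀ j ≤ Multiset.card s,
      s.esymm (Multiset.card s - j) = s.prod * (s.map (fun x => x⁻¹)).esymm j := by
  induction s using Multiset.induction with
  | empty =>
    intro j hj
    simp only [Multiset.card_zero, Nat.le_zero] at hj
    subst hj
    simp [ms_esymm_zero]
  | cons a s ih =>
    have ha : a ≠ 0 := fun h => h0 (by simp [h])
    have h0s : (0:ℝ) ∉ s := fun h => h0 (Multiset.mem_cons_of_mem h)
    have hps : s.prod ≠ 0 := Multiset.prod_ne_zero h0s
    intro j hj
    rw [Multiset.card_cons] at hj
    match j with
    | 0 =>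
      simp only [Nat.sub_zero, ms_esymm_zero, mul_one]
      exact ms_esymm_card _
    | (j+1) =>
      have hj' : j ≤ Multiset.card s := by omega
      rw [Multiset.map_cons, Multiset.card_cons, ms_esymm_cons, Multiset.prod_cons]
      rcases eq_or_lt_of_le hj' with rfl | hjlt
      · -- j = card s : LHS esymm 0 = 1
        rw [show Multiset.card s + 1 - (Multiset.card s + 1) = 0 from by omega, ms_esymm_zero]
        rw [ms_esymm_of_lt _ (show Multiset.card (s.map (fun x:ℝ => x⁻¹)) < Multiset.card s + 1 from by simp)]
        have hcz : Multiset.card (s.map (fun x : ℝ => x⁻¹)) = Multiset.card s := by simp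
        rw [← hcz, ms_esymm_card, Multiset.prod_map_inv']
        field_simp
        ring
      · -- j < card s
        have h1 : Multiset.card s + 1 - (j+1) = (Multiset.card s - (j+1)) + 1 := by omega
        rw [h1, ms_esymm_cons, ih h0s (j+1) (by omega)]
        have h2 : Multiset.card s - (j+1) + 1 = Multiset.card s - j := by omega
        rw [h2, ih h0s j hj']
        field_simp
        ring
open Multiset Polynomial in
lemma ms_deriv (n : ℕ) (s : Multiset ℝ) (hs : Multiset.card s = n + 1) :
    ∃ t : Multiset ℝ, Multiset.card t = n ∧
      ∀ j ≤ n, ((n : ℝ) + 1) * t.esymm j = ((n : ℝ) + 1 - j) * s.esymm j := by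
  set p : Polynomial ℝ := (s.map (fun a => X + C a)).prod with hp
  have hmonic : p.Monic :=
    monic_multiset_prod_of_monic _ _ (fun a _ => monic_X_add_C a)
  have hdeg : p.natDegree = n + 1 := by
    have hm : ∀ f ∈ s.map (fun a : ℝ => X + C a), f.Monic := by
      intro f hf
      obtain ⟨a, -, rfl⟩ := Multiset.mem_map.mp hf
      exact monic_X_add_C a
    rw [hp, natDegree_multiset_prod_of_monic _ hm]
    simp [Multiset.map_map, Function.comp_def, hs]
    omega
  have hroots : p.roots = s.map (fun a => -a) := by
    have : p = ((s.map (fun a => -a)).map (fun a => X - C a)).prod := by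
      rw [hp, Multiset.map_map]
      congr 1
      apply Multiset.map_congr rfl
      intro x _
      simp [sub_neg_eq_add]
    rw [this, roots_multiset_prod_X_sub_C]
  have hcroots : Multiset.card p.roots = n + 1 := by rw [hroots]; simp [hs]
  have hcard_der_le : Multiset.card (derivative p).roots ≤ n := by
    refine (Polynomial.card_roots' _).trans ?_
    have := Polynomial.natDegree_derivative_le p
    omega
  have hcard_der : Multiset.card (derivative p).roots = n := by
    have := p.card_roots_le_derivative
    omega
  have hdeg_der : (derivative p).natDegree = n := by
    have h1 := Polynomial.card_roots' (derivative p)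
    have h2 := Polynomial.natDegree_derivative_le p
    omega
  have hsplit : (derivative p).Splits := by
    rw [Polynomial.splits_iff_card_roots, hcard_der, hdeg_der]
  have hlead : (derivative p).leadingCoeff = (n : ℝ) + 1 := by
    have hc : p.coeff (n + 1) = 1 := by
      have h := hmonic.coeff_natDegree
      rwa [hdeg] at h
    rw [Polynomial.leadingCoeff, hdeg_der, Polynomial.coeff_derivative, hc, one_mul]
  have hfact : derivative p = C ((n : ℝ) + 1) * ((derivative p).roots.map (fun a => X - C a)).prod := by
    rw [← hlead]
    exact hsplit.eq_prod_roots
  refine ⟨(derivative p).roots.map (fun a => -a), by simp [hcard_der], ?_⟩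
  set t : Multiset ℝ := (derivative p).roots.map (fun a => -a) with ht
  have htcard : Multiset.card t = n := by simp [ht, hcard_der]
  have hfact' : derivative p = C ((n : ℝ) + 1) * (t.map (fun a => X + C a)).prod := by
    rw [hfact, ht, Multiset.map_map]
    congr 2
    apply Multiset.map_congr rfl
    intro x _
    simp [sub_eq_add_neg]
  intro j hj
  have h1 : ((t.map (fun a => X + C a)).prod).coeff (n - j) = t.esymm j := by
    rw [Multiset.prod_X_add_C_coeff _ (by rw [htcard]; omega), htcard]
    congr 1
    omega
  have h2 : p.coeff (n - j + 1) = s.esymm j := by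
    rw [hp, Multiset.prod_X_add_C_coeff _ (by rw [hs]; omega), hs]
    congr 1
    omega
  have h3 := Polynomial.coeff_derivative p (n - j)
  rw [hfact'] at h3
  rw [Polynomial.coeff_C_mul, h1, h2] at h3
  rw [h3]
  have : ((n : ℝ) - (j:ℝ) + 1) = ((n:ℝ) + 1 - j) := by ring
  rw [show (((n - j : ℕ) : ℝ) + 1) = ((n : ℝ) + 1 - j) from by
    rw [Nat.cast_sub hj]; ring]
  ring
lemma nat_absorb {n j : ℕ} (h : j ≤ n) :
    (n + 1 - j) * (n + 1).choose j = (n + 1) * n.choose j := by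
  have h1 : (n + 1).choose j = (n + 1).choose (n + 1 - j) :=
    (Nat.choose_symm (show j ≤ n + 1 from by omega)).symm
  rw [h1, show n + 1 - j = (n - j) + 1 from by omega]
  have h2 := Nat.add_one_mul_choose_eq n (n - j)
  rw [Nat.choose_symm h] at h2
  rw [mul_comm]
  exact h2.symm

lemma cast_absorb (n j : ℕ) (h : j ≤ n) :
    (((n : ℝ) + 1) - (j : ℝ)) * ((n + 1).choose j : ℝ) = ((n : ℝ) + 1) * (n.choose j : ℝ) := by
  have h0 := nat_absorb h
  have h1 : (((n + 1 - j) * (n + 1).choose j : ℕ) : ℝ) = (((n + 1) * n.choose j : ℕ) : ℝ) := by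
    exact_mod_cast congrArg (fun x : ℕ => (x : ℝ)) h0
  push_cast [Nat.cast_sub (show j ≤ n + 1 from by omega)] at h1
  linarith

set_option maxHeartbeats 1000000 in
open Multiset in
lemma newton_ms : ∀ (n : ℕ) (s : Multiset ℝ), Multiset.card s = n → ∀ m, m + 2 ≤ n →
    ((n.choose (m+1) : ℝ)) ^ 2 * (s.esymm m * s.esymm (m+2))
      ≤ (n.choose m : ℝ) * ((n.choose (m+2) : ℝ)) * s.esymm (m+1) ^ 2 := by
  intro n
  induction n with
  | zero => intro s hs m hm; omega
  | succ n IH =>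
    intro s hs m hm
    rcases eq_or_lt_of_le hm with htop | hlt
    · -- top case : m + 2 = n + 1
      by_cases h0 : (0:ℝ) ∈ s
      · have h1 : s.esymm (m+2) = 0 := by
          rw [show m + 2 = Multiset.card s from by omega, ms_esymm_card]
          exact Multiset.prod_eq_zero h0
        rw [h1, mul_zero, mul_zero]
        positivity
      · set z : Multiset ℝ := s.map (fun x => x⁻¹) with hz
        have hzc : Multiset.card z = n + 1 := by simp [hz, hs]
        have hinv := ms_esymm_inv s h0
        have hsm : s.esymm m = s.prod * z.esymm 2 := by
          have := hinv 2 (by omega)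
          rwa [hs, show n + 1 - 2 = m from by omega] at this
        have hsm1 : s.esymm (m+1) = s.prod * z.esymm 1 := by
          have := hinv 1 (by omega)
          rwa [hs, show n + 1 - 1 = m + 1 from by omega] at this
        have hsm2 : s.esymm (m+2) = s.prod := by
          rw [show m + 2 = Multiset.card s from by omega, ms_esymm_card]
        have hbase := newton_base z
        rw [hzc] at hbase
        have hch1 : (n+1).choose (m+1) = n + 1 := by
          rw [show m + 1 = n from by omega]
          exact Nat.choose_succ_self_right n
        have hch2 : (n+1).choose (m+2) = 1 := by
          rw [show m + 2 = n + 1 from by omega, Nat.choose_self]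
        have hch0 : (n+1).choose m = (n+1).choose 2 := by
          have h2 := Nat.choose_symm (show m ≤ n + 1 from by omega)
          rw [show n + 1 - m = 2 from by omega] at h2
          exact h2.symm
        rw [hsm, hsm1, hsm2, hch1, hch2, hch0]
        have hb2 := mul_le_mul_of_nonneg_left hbase (sq_nonneg s.prod)
        push_cast at hb2 ⊢
        nlinarith [hb2]
    · -- m + 2 ≤ n : derivative step
      obtain ⟨t, htc, hte⟩ := ms_deriv n s hs
      have IH' := IH t htc m (by omega)
      have e1 : ((n:ℝ)+1) * t.esymm m = (((n:ℝ)+1) - m) * s.esymm m := hte m (by omega)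
      have e2 : ((n:ℝ)+1) * t.esymm (m+1) = (((n:ℝ)+1) - (m+1)) * s.esymm (m+1) := by
        have := hte (m+1) (by omega); push_cast at this ⊢; linarith
      have e3 : ((n:ℝ)+1) * t.esymm (m+2) = (((n:ℝ)+1) - (m+2)) * s.esymm (m+2) := by
        have := hte (m+2) (by omega); push_cast at this ⊢; linarith
      have H3 : ((n.choose (m+1) : ℝ)) ^ 2 *
            (((((n:ℝ)+1) - m) * s.esymm m) * (((((n:ℝ)+1)) - (m+2)) * s.esymm (m+2)))
          ≤ (n.choose m : ℝ) * ((n.choose (m+2) : ℝ)) * ((((n:ℝ)+1) - (m+1)) * s.esymm (m+1)) ^ 2 := by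
        rw [← e1, ← e2, ← e3]
        nlinarith [mul_le_mul_of_nonneg_left IH' (by positivity : (0:ℝ) ≤ ((n:ℝ)+1) ^ 2)]
      have id1 : (((n:ℝ)+1) - m) * ((n+1).choose m : ℝ) = ((n:ℝ)+1) * (n.choose m : ℝ) :=
        cast_absorb n m (by omega)
      have id2 : (((n:ℝ)+1) - (m+1)) * ((n+1).choose (m+1) : ℝ) = ((n:ℝ)+1) * (n.choose (m+1) : ℝ) := by
        have := cast_absorb n (m+1) (by omega); push_cast at this ⊢; linarith
      have id3 : (((n:ℝ)+1) - (m+2)) * ((n+1).choose (m+2) : ℝ) = ((n:ℝ)+1) * (n.choose (m+2) : ℝ) := by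
        have := cast_absorb n (m+2) (by omega); push_cast at this ⊢; linarith
      have hApos : (0:ℝ) < ((n:ℝ)+1) - m := by
        have : (m:ℝ) + 2 < (n:ℝ) + 1 := by exact_mod_cast hlt
        linarith
      have hBpos : (0:ℝ) < ((n:ℝ)+1) - ((m:ℝ)+1) := by
        have : (m:ℝ) + 2 < (n:ℝ) + 1 := by exact_mod_cast hlt
        linarith
      have hCpos : (0:ℝ) < ((n:ℝ)+1) - ((m:ℝ)+2) := by
        have : (m:ℝ) + 2 < (n:ℝ) + 1 := by exact_mod_cast hlt
        linarith
      have hFpos : (0:ℝ) < (((n:ℝ)+1) - m) * (((n:ℝ)+1) - ((m:ℝ)+1)) ^ 2 * (((n:ℝ)+1) - ((m:ℝ)+2)) :=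
        mul_pos (mul_pos hApos (pow_pos hBpos 2)) hCpos
      refine le_of_mul_le_mul_left ?_ hFpos
      calc (((n:ℝ)+1) - m) * (((n:ℝ)+1) - ((m:ℝ)+1)) ^ 2 * (((n:ℝ)+1) - ((m:ℝ)+2)) *
            (((((n+1)).choose (m+1) : ℝ)) ^ 2 * (s.esymm m * s.esymm (m+2)))
          = ((n:ℝ)+1) ^ 2 * (((n.choose (m+1) : ℝ)) ^ 2 *
              (((((n:ℝ)+1) - m) * s.esymm m) * (((((n:ℝ)+1)) - (m+2)) * s.esymm (m+2)))) := by
            linear_combination ((((n:ℝ)+1) - m) * (((n:ℝ)+1) - ((m:ℝ)+2)) * (s.esymm m * s.esymm (m+2)) *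
              ((((n:ℝ)+1) - ((m:ℝ)+1)) * (((n+1)).choose (m+1) : ℝ) + ((n:ℝ)+1) * (n.choose (m+1) : ℝ))) * id2
        _ ≤ ((n:ℝ)+1) ^ 2 * ((n.choose m : ℝ) * ((n.choose (m+2) : ℝ)) *
              ((((n:ℝ)+1) - (m+1)) * s.esymm (m+1)) ^ 2) :=
            mul_le_mul_of_nonneg_left H3 (by positivity)
        _ = (((n:ℝ)+1) - m) * (((n:ℝ)+1) - ((m:ℝ)+1)) ^ 2 * (((n:ℝ)+1) - ((m:ℝ)+2)) *
            (((n+1).choose m : ℝ) * (((n+1)).choose (m+2) : ℝ) * s.esymm (m+1) ^ 2) := by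
            linear_combination (-(s.esymm (m+1) ^ 2) * (((n:ℝ)+1) - ((m:ℝ)+1)) ^ 2) *
              ((((n:ℝ)+1) * ((n.choose (m+2) : ℝ))) * id1
                + ((((n:ℝ)+1) - (m:ℝ)) * (((n+1)).choose m : ℝ)) * id3)
lemma esymm_eq_ms (n m : ℕ) (x : Fin n → ℝ) :
    esymm n m x = ((Finset.univ : Finset (Fin n)).val.map x).esymm m := by
  rw [esymm, Finset.esymm_map_val]

lemma newton_fn {n m : ℕ} (h : m + 2 ≤ n) (x : Fin n → ℝ) :
    ((n.choose (m+1) : ℝ)) ^ 2 * (esymm n m x * esymm n (m+2) x)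
      ≤ (n.choose m : ℝ) * ((n.choose (m+2) : ℝ)) * esymm n (m+1) x ^ 2 := by
  rw [esymm_eq_ms, esymm_eq_ms, esymm_eq_ms]
  exact newton_ms n _ (by simp) m h

lemma chain (n k : ℕ) (hkn : k ≤ n) :
    ∀ i, i + 2 ≤ k → ∃ c : ℝ, 0 < c ∧ ∀ lam : Fin n → ℝ,
      (∀ m, 1 ≤ m → m ≤ k → 0 < esymm n m lam) →
      c * (esymm n 1 lam * esymm n (i+2) lam ^ i) ≤ esymm n (i+1) lam ^ (i+1) := by
  intro i
  induction i with
  | zero =>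
    intro _
    exact ⟨1, one_pos, fun lam _ => by simp⟩
  | succ i IHi =>
    intro hik
    obtain ⟨c, hc, hcc⟩ := IHi (by omega)
    set A : ℝ := ((n.choose (i+2) : ℝ)) ^ 2 with hA
    set B : ℝ := (n.choose (i+1) : ℝ) * ((n.choose (i+3) : ℝ)) with hB
    have hApos : 0 < A := by
      have := Nat.choose_pos (show i + 2 ≤ n from by omega)
      rw [hA]; positivity
    have hBpos : 0 < B := by
      have h1 := Nat.choose_pos (show i + 1 ≤ n from by omega)
      have h2 := Nat.choose_pos (show i + 3 ≤ n from by omega)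
      rw [hB]; positivity
    refine ⟨c / (B / A) ^ (i+1), by positivity, fun lam hpos => ?_⟩
    have hp1 := hpos 1 (by omega) (by omega)
    have hp2 := hpos (i+1) (by omega) (by omega)
    have hp3 := hpos (i+2) (by omega) (by omega)
    have hp4 := hpos (i+3) (by omega) (by omega)
    have hIH := hcc lam hpos
    have hNewton := newton_fn (show (i+1) + 2 ≤ n from by omega) lam
    -- rearrange Newton : σ_{i+1} σ_{i+3} ≤ (B/A) σ_{i+2}^2
    have h1 : esymm n (i+1) lam * esymm n (i+3) lam ≤ (B / A) * esymm n (i+2) lam ^ 2 := by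
      rw [div_mul_eq_mul_div, le_div_iff₀ hApos]
      calc (esymm n (i+1) lam * esymm n (i+3) lam) * A
          = A * (esymm n (i+1) lam * esymm n (i+3) lam) := by ring
        _ ≤ B * esymm n (i+2) lam ^ 2 := by
            rw [hA, hB]
            exact hNewton
    have hD : 0 < (B / A) := by positivity
    have h2 : (esymm n (i+1) lam * esymm n (i+3) lam) ^ (i+1)
        ≤ ((B / A) * esymm n (i+2) lam ^ 2) ^ (i+1) :=
      pow_le_pow_left₀ (by positivity) h1 (i+1)
    have h3 : c * (esymm n 1 lam * esymm n (i+2) lam ^ i) * esymm n (i+3) lam ^ (i+1)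
        ≤ esymm n (i+1) lam ^ (i+1) * esymm n (i+3) lam ^ (i+1) :=
      mul_le_mul_of_nonneg_right hIH (by positivity)
    have h4 : esymm n (i+1) lam ^ (i+1) * esymm n (i+3) lam ^ (i+1)
        ≤ (B / A) ^ (i+1) * esymm n (i+2) lam ^ (2*(i+1)) := by
      calc esymm n (i+1) lam ^ (i+1) * esymm n (i+3) lam ^ (i+1)
          = (esymm n (i+1) lam * esymm n (i+3) lam) ^ (i+1) := (mul_pow ..).symm
        _ ≤ ((B / A) * esymm n (i+2) lam ^ 2) ^ (i+1) := h2
        _ = (B / A) ^ (i+1) * esymm n (i+2) lam ^ (2*(i+1)) := by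
            rw [mul_pow, ← pow_mul, mul_comm 2 (i+1)]
    have h5 : c * (esymm n 1 lam * esymm n (i+3) lam ^ (i+1)) * esymm n (i+2) lam ^ i
        ≤ ((B / A) ^ (i+1) * esymm n (i+2) lam ^ (i+2)) * esymm n (i+2) lam ^ i := by
      calc c * (esymm n 1 lam * esymm n (i+3) lam ^ (i+1)) * esymm n (i+2) lam ^ i
          = c * (esymm n 1 lam * esymm n (i+2) lam ^ i) * esymm n (i+3) lam ^ (i+1) := by ring
        _ ≤ esymm n (i+1) lam ^ (i+1) * esymm n (i+3) lam ^ (i+1) := h3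
        _ ≤ (B / A) ^ (i+1) * esymm n (i+2) lam ^ (2*(i+1)) := h4
        _ = ((B / A) ^ (i+1) * esymm n (i+2) lam ^ (i+2)) * esymm n (i+2) lam ^ i := by
            rw [show 2*(i+1) = (i+2) + i from by omega]
            ring
    have h6 : c * (esymm n 1 lam * esymm n (i+3) lam ^ (i+1))
        ≤ (B / A) ^ (i+1) * esymm n (i+2) lam ^ (i+2) :=
      le_of_mul_le_mul_right h5 (by positivity)
    show c / (B / A) ^ (i+1) * (esymm n 1 lam * esymm n (i+3) lam ^ (i+1))
        ≤ esymm n (i+2) lam ^ (i+2)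
    rw [div_mul_eq_mul_div, div_le_iff₀ (by positivity)]
    nlinarith [h6]
theorem stmt15 (n k : ℕ) (hk : 2 ≤ k) (hkn : k ≤ n) :
    ∃ c : ℝ, 0 < c ∧
      ∀ lam : Fin n → ℝ,
        (∀ m, 1 ≤ m → m ≤ k → 0 < esymm n m lam) →
        esymm n (k - 1) lam
          ≥ c * esymm n 1 lam ^ ((1 : ℝ) / (k - 1 : ℝ))
              * esymm n k lam ^ (((k : ℝ) - 2) / ((k : ℝ) - 1)) := by
  obtain ⟨i, hi⟩ : ∃ i, i + 2 = k := ⟨k - 2, by omega⟩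
  obtain ⟨c, hc, hcc⟩ := chain n k hkn i (by omega)
  set e : ℝ := (k : ℝ) - 1 with he
  have hie : ((i : ℝ) + 1) = e := by
    rw [he, ← hi]; push_cast; ring
  have hepos : (0 : ℝ) < e := by
    have : (2 : ℝ) ≤ (k : ℝ) := by exact_mod_cast hk
    rw [he]; linarith
  refine ⟨c ^ ((1:ℝ)/e), by positivity, fun lam hpos => ?_⟩
  have hp1 := hpos 1 (by omega) (by omega)
  have hpk1 := hpos (i+1) (by omega) (by omega)
  have hpk := hpos (i+2) (by omega) (by omega)
  have hkey := hcc lam hpos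
  rw [ge_iff_le, show k - 1 = i + 1 from by omega, show k = i + 2 from hi.symm]
  -- goal : c^(1/e) * esymm n 1 lam ^ (1/e) * esymm n (i+2) lam ^ (((k:ℝ)-2)/e) ≤ esymm n (i+1) lam
  set a : ℝ := esymm n 1 lam
  set b : ℝ := esymm n (i+1) lam
  set d : ℝ := esymm n (i+2) lam
  have hb : 0 < b := hpk1
  have ha : 0 < a := hp1
  have hd : 0 < d := hpk
  -- hkey : c * (a * d ^ i) ≤ b ^ (i+1)
  have h1 : (c * (a * d ^ i)) ^ ((1:ℝ)/e) ≤ (b ^ (i+1)) ^ ((1:ℝ)/e) :=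
    Real.rpow_le_rpow (by positivity) hkey (by positivity)
  have h2 : (b ^ (i+1) : ℝ) ^ ((1:ℝ)/e) = b := by
    rw [← Real.rpow_natCast b (i+1), ← Real.rpow_mul hb.le]
    push_cast
    rw [hie, mul_one_div, div_self hepos.ne', Real.rpow_one]
  have h3 : (c * (a * d ^ i)) ^ ((1:ℝ)/e)
      = c ^ ((1:ℝ)/e) * a ^ ((1:ℝ)/e) * d ^ ((((i+2 : ℕ):ℝ) - 2)/e) := by
    rw [Real.mul_rpow hc.le (by positivity), Real.mul_rpow ha.le (by positivity),
      ← Real.rpow_natCast d i, ← Real.rpow_mul hd.le]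
    have hexp : (i : ℝ) * ((1:ℝ)/e) = (((i+2 : ℕ):ℝ) - 2)/e := by
      push_cast; ring
    rw [hexp, mul_assoc]
  rw [← h2, ← h3]
  exact h1
end

section
/- Second derivative formula for symmetric functions: let F be a C² symmetric function on an open set of n×n symmetric matrices, A a diagonal matrix with distinct diagonal entries κ₁, …, κₙ in the domain, and f the associated symmetric function of eigenvalues with F(A) = f(κ). Then for any symmetric matrix B, the second derivative of F at A in direction B equals Σ_{j,k} f̈^{jk} B_{jj} B_{kk} + 2 Σ_{j<k} (ḟ^j − ḟ^k)/(κ_j − κ_k) · B_{jk}², where ḟ^j = ∂f/∂κ_j and f̈^{jk} = ∂²f/∂κ_j∂κ_k. -/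
open Matrix Filter Topology

attribute [local instance] Matrix.frobeniusNormedAddCommGroup Matrix.frobeniusNormedSpace

namespace Stmt17Aux

variable {n : ℕ}

local notation "Mtx" => Matrix (Fin n) (Fin n) ℝ

noncomputable instance instNACGclm1 : NormedAddCommGroup (Mtx →L[ℝ] ℝ) :=
  ContinuousLinearMap.toNormedAddCommGroup

noncomputable instance instNSclm1 : NormedSpace ℝ (Mtx →L[ℝ] ℝ) :=
  ContinuousLinearMap.toNormedSpace

noncomputable instance instNACGclm2 : NormedAddCommGroup (Mtx →L[ℝ] Mtx →L[ℝ] ℝ) :=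
  ContinuousLinearMap.toNormedAddCommGroup

/-- Second derivative of `F` along a `C²` curve. -/
theorem curve2 {Ψ : Set Mtx} (hΨ : IsOpen Ψ) {F : Mtx → ℝ} (hF : ContDiffOn ℝ 2 F Ψ)
    {M : ℝ → Mtx} (hM : ContDiff ℝ 2 M) (h0 : M 0 ∈ Ψ) :
    deriv (deriv (fun t => F (M t))) 0 =
      fderiv ℝ (fderiv ℝ F) (M 0) (deriv M 0) (deriv M 0)
      + fderiv ℝ F (M 0) (deriv (deriv M) 0) := by
  have hFat : ∀ x ∈ Ψ, ContDiffAt ℝ 2 F x := fun x hx => hF.contDiffAt (hΨ.mem_nhds hx)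
  have hU : ∀ᶠ s in 𝓝 (0:ℝ), M s ∈ Ψ :=
    hM.continuous.continuousAt.preimage_mem_nhds (hΨ.mem_nhds h0)
  have hMd : ∀ s : ℝ, HasDerivAt M (deriv M s) s :=
    fun s => ((hM.differentiable (by norm_num)) s).hasDerivAt
  have h1 : ∀ᶠ s in 𝓝 (0:ℝ), deriv (fun t => F (M t)) s
      = fderiv ℝ F (M s) (deriv M s) := by
    filter_upwards [hU] with s hs
    have hFd : HasFDerivAt F (fderiv ℝ F (M s)) (M s) :=
      ((hFat _ hs).differentiableAt (by norm_num)).hasFDerivAt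
    exact (hFd.comp_hasDerivAt s (hMd s)).deriv
  rw [Filter.EventuallyEq.deriv_eq (h1 : _ =ᶠ[𝓝 (0:ℝ)] _)]
  have hΦ : ContDiffAt ℝ 1 (fderiv ℝ F) (M 0) :=
    (hFat _ h0).fderiv_right (m := 1) (by norm_num)
  have hΦd : HasFDerivAt (fderiv ℝ F) (fderiv ℝ (fderiv ℝ F) (M 0)) (M 0) :=
    (hΦ.differentiableAt one_ne_zero).hasFDerivAt
  have hc : HasDerivAt (fun s => fderiv ℝ F (M s))
      (fderiv ℝ (fderiv ℝ F) (M 0) (deriv M 0)) 0 :=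
    hΦd.comp_hasDerivAt 0 (hMd 0)
  have hdM : ContDiff ℝ 1 (deriv M) := by
    have h2 : ContDiff ℝ ((1:ℕ∞) + 1) M := by exact_mod_cast hM
    exact ((contDiff_succ_iff_deriv).mp (by exact_mod_cast h2)).2.2
  have hu : HasDerivAt (deriv M) (deriv (deriv M) 0) 0 :=
    ((hdM.differentiable one_ne_zero) 0).hasDerivAt
  exact (hc.clm_apply hu).deriv

theorem line2 {Ψ : Set Mtx} (hΨ : IsOpen Ψ) {F : Mtx → ℝ} (hF : ContDiffOn ℝ 2 F Ψ)
    {A : Mtx} (hA : A ∈ Ψ) (X : Mtx) :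
    deriv (deriv (fun t : ℝ => F (A + t • X))) 0 = fderiv ℝ (fderiv ℝ F) A X X := by
  have hM : ContDiff ℝ 2 (fun t : ℝ => A + t • X) :=
    contDiff_const.add (contDiff_id.smul contDiff_const)
  have hd : ∀ s : ℝ, HasDerivAt (fun t : ℝ => A + t • X) X s := by
    intro s
    exact (((hasDerivAt_id s).smul_const X).const_add A).congr_deriv (one_smul ℝ X)
  have hder : deriv (fun t : ℝ => A + t • X) = fun _ => X := funext fun s => (hd s).deriv
  have h0 : (fun t : ℝ => A + t • X) 0 ∈ Ψ := by simpa using hA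
  have := curve2 hΨ hF hM h0
  simp only [zero_smul, add_zero] at this
  rw [this, hder]
  erw [deriv_const]
  simp

theorem Hsymm {Ψ : Set Mtx} (hΨ : IsOpen Ψ) {F : Mtx → ℝ} (hF : ContDiffOn ℝ 2 F Ψ)
    {A : Mtx} (hA : A ∈ Ψ) (X Y : Mtx) :
    fderiv ℝ (fderiv ℝ F) A X Y = fderiv ℝ (fderiv ℝ F) A Y X := by
  apply second_derivative_symmetric_of_eventually (f := F) (f' := fderiv ℝ F)
  · filter_upwards [hΨ.mem_nhds hA] with y hy
    exact ((hF.contDiffAt (hΨ.mem_nhds hy)).differentiableAt two_ne_zero).hasFDerivAt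
  · exact (((hF.contDiffAt (hΨ.mem_nhds hA)).fderiv_right
      (m := 1) (by norm_num)).differentiableAt one_ne_zero).hasFDerivAt

theorem memline {Ψ : Set Mtx} (hΨ : IsOpen Ψ) {A : Mtx} (hA : A ∈ Ψ) (X : Mtx) :
    ∀ᶠ t : ℝ in 𝓝 0, A + t • X ∈ Ψ := by
  have hc : ContinuousAt (fun t : ℝ => A + t • X) 0 :=
    (continuous_const.add (continuous_id.smul continuous_const)).continuousAt
  have := hc.preimage_mem_nhds (by simpa using hΨ.mem_nhds hA)
  exact this

theorem qinv {Ψ : Set Mtx} (hΨ : IsOpen Ψ) {F : Mtx → ℝ} (hF : ContDiffOn ℝ 2 F Ψ)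
    (hFinv : ∀ M ∈ Ψ, ∀ Q : Mtx, Qᵀ * Q = 1 → F (Qᵀ * M * Q) = F M)
    {A : Mtx} (hA : A ∈ Ψ) {Q : Mtx} (hQ : Qᵀ * Q = 1) (hQA : Qᵀ * A * Q = A) (X : Mtx) :
    fderiv ℝ (fderiv ℝ F) A (Qᵀ * X * Q) (Qᵀ * X * Q) = fderiv ℝ (fderiv ℝ F) A X X := by
  rw [← line2 hΨ hF hA X, ← line2 hΨ hF hA (Qᵀ * X * Q)]
  apply Filter.EventuallyEq.deriv_eq
  apply Filter.EventuallyEq.deriv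
  filter_upwards [memline hΨ hA X] with t ht
  have he : A + t • (Qᵀ * X * Q) = Qᵀ * (A + t • X) * Q := by
    rw [mul_add, add_mul, hQA, Matrix.mul_smul, Matrix.smul_mul]
  show F (A + t • (Qᵀ * X * Q)) = F (A + t • X)
  rw [he, hFinv _ ht _ hQ]

theorem Hconj {Ψ : Set Mtx} (hΨ : IsOpen Ψ) {F : Mtx → ℝ} (hF : ContDiffOn ℝ 2 F Ψ)
    (hFinv : ∀ M ∈ Ψ, ∀ Q : Mtx, Qᵀ * Q = 1 → F (Qᵀ * M * Q) = F M)
    {A : Mtx} (hA : A ∈ Ψ) {Q : Mtx} (hQ : Qᵀ * Q = 1) (hQA : Qᵀ * A * Q = A) (X Y : Mtx) :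
    fderiv ℝ (fderiv ℝ F) A (Qᵀ * X * Q) (Qᵀ * Y * Q) = fderiv ℝ (fderiv ℝ F) A X Y := by
  set H := fderiv ℝ (fderiv ℝ F) A with hH
  have pol : ∀ U V : Mtx, H U V = (H (U + V) (U + V) - H U U - H V V) / 2 := by
    intro U V
    have hsym : H V U = H U V := Hsymm hΨ hF hA V U
    simp only [map_add, ContinuousLinearMap.add_apply]
    rw [hsym]; ring
  have hsum : Qᵀ * (X + Y) * Q = Qᵀ * X * Q + Qᵀ * Y * Q := by
    rw [mul_add, add_mul]
  rw [pol, pol X Y, ← hsum,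
    qinv hΨ hF hFinv hA hQ hQA (X + Y), qinv hΨ hF hFinv hA hQ hQA X,
    qinv hΨ hF hFinv hA hQ hQA Y]

theorem conj_diag_std (ε : Fin n → ℝ) (a b : Fin n) :
    (diagonal ε)ᵀ * single a b (1:ℝ) * diagonal ε
      = (ε a * ε b) • single a b 1 := by
  rw [Matrix.diagonal_transpose]
  ext i j
  rw [Matrix.mul_diagonal, Matrix.diagonal_mul, Matrix.smul_apply]
  simp only [Matrix.single, Matrix.of_apply, mul_ite, ite_mul, mul_one, mul_zero,
    zero_mul, smul_eq_mul]
  split_ifs with h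
  · obtain ⟨rfl, rfl⟩ := h; ring
  · ring

theorem flip_orth {ε : Fin n → ℝ} (hε : ∀ i, ε i * ε i = 1) :
    (diagonal ε)ᵀ * diagonal ε = 1 := by
  rw [Matrix.diagonal_transpose, Matrix.diagonal_mul_diagonal]
  have : (fun i => ε i * ε i) = fun _ => (1:ℝ) := funext hε
  rw [this, Matrix.diagonal_one]

theorem flip_fix {ε : Fin n → ℝ} (hε : ∀ i, ε i * ε i = 1) (κ : Fin n → ℝ) :
    (diagonal ε)ᵀ * diagonal κ * diagonal ε = diagonal κ := by
  rw [Matrix.diagonal_transpose, Matrix.diagonal_mul_diagonal, Matrix.diagonal_mul_diagonal]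
  have h : (fun i => ε i * κ i * ε i) = κ := funext fun i => by linear_combination κ i * hε i
  rw [h]

theorem conjC (ε : Fin n → ℝ) (p q : Fin n) :
    (diagonal ε)ᵀ * (single p q (1:ℝ) + single q p 1) * diagonal ε
      = (ε p * ε q) • (single p q (1:ℝ) + single q p 1) := by
  rw [mul_add, add_mul, conj_diag_std, conj_diag_std, smul_add, mul_comm (ε q)]

theorem Hzero1 {Ψ : Set Mtx} (hΨ : IsOpen Ψ) {F : Mtx → ℝ} (hF : ContDiffOn ℝ 2 F Ψ)
    (hFinv : ∀ M ∈ Ψ, ∀ Q : Mtx, Qᵀ * Q = 1 → F (Qᵀ * M * Q) = F M)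
    {κ : Fin n → ℝ} (hA : diagonal κ ∈ Ψ) (j p q : Fin n) (hpq : p ≠ q) :
    fderiv ℝ (fderiv ℝ F) (diagonal κ) (single j j 1)
      (single p q (1:ℝ) + single q p 1) = 0 := by
  set ε : Fin n → ℝ := fun x => if x = p then (-1:ℝ) else 1 with hεdef
  have hε : ∀ i, ε i * ε i = 1 := by
    intro i; by_cases h : i = p <;> simp [hεdef, h]
  have h1 := Hconj hΨ hF hFinv hA (flip_orth hε) (flip_fix hε κ)
    (single j j 1) (single p q (1:ℝ) + single q p 1)
  have hεp : ε p = -1 := by simp [hεdef]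
  have hεq : ε q = 1 := by simp [hεdef, hpq.symm]
  rw [conj_diag_std, hε j, one_smul, conjC, hεp, hεq, _root_.map_smul, smul_eq_mul] at h1
  linarith

theorem Hzero2 {Ψ : Set Mtx} (hΨ : IsOpen Ψ) {F : Mtx → ℝ} (hF : ContDiffOn ℝ 2 F Ψ)
    (hFinv : ∀ M ∈ Ψ, ∀ Q : Mtx, Qᵀ * Q = 1 → F (Qᵀ * M * Q) = F M)
    {κ : Fin n → ℝ} (hA : diagonal κ ∈ Ψ) {p q r s : Fin n}
    (hpq : p < q) (hrs : r < s) (hne : (p, q) ≠ (r, s)) :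
    fderiv ℝ (fderiv ℝ F) (diagonal κ)
      (single p q (1:ℝ) + single q p 1)
      (single r s (1:ℝ) + single s r 1) = 0 := by
  have key : ∀ i : Fin n, (i = p ∨ i = q) → i ≠ r → i ≠ s →
      fderiv ℝ (fderiv ℝ F) (diagonal κ)
        (single p q (1:ℝ) + single q p 1)
        (single r s (1:ℝ) + single s r 1) = 0 := by
    intro i hi hir his
    set ε : Fin n → ℝ := fun x => if x = i then (-1:ℝ) else 1 with hεdef
    have hε : ∀ x, ε x * ε x = 1 := by
      intro x; by_cases h : x = i <;> simp [hεdef, h]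
    have h1 := Hconj hΨ hF hFinv hA (flip_orth hε) (flip_fix hε κ)
      (single p q (1:ℝ) + single q p 1)
      (single r s (1:ℝ) + single s r 1)
    have hεpq : ε p * ε q = -1 := by
      rcases hi with rfl | rfl
      · have : q ≠ i := fun h => hpq.ne (h.symm ▸ rfl)
        simp [hεdef, this]
      · have : p ≠ i := fun h => hpq.ne (h ▸ rfl)
        simp [hεdef, this]
    have hεrs : ε r * ε s = 1 := by
      have h1' : r ≠ i := fun h => hir h.symm
      have h2' : s ≠ i := fun h => his h.symm
      simp [hεdef, h1', h2']
    rw [conjC, conjC, hεpq, hεrs, one_smul, _root_.map_smul,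
      ContinuousLinearMap.smul_apply, smul_eq_mul] at h1
    linarith
  by_cases hpr : p ≠ r ∧ p ≠ s
  · exact key p (Or.inl rfl) hpr.1 hpr.2
  · push_neg at hpr
    by_cases hpr2 : p = r
    · subst hpr2
      have hqs : q ≠ s := fun h => hne (by rw [h])
      exact key q (Or.inr rfl) (ne_of_gt hpq) hqs
    · have hps : p = s := hpr hpr2
      subst hps
      have h1' : r < q := lt_trans hrs hpq
      exact key q (Or.inr rfl) (ne_of_gt h1') (ne_of_gt hpq)

noncomputable def dg (n : ℕ) : (Fin n → ℝ) →L[ℝ] Matrix (Fin n) (Fin n) ℝ :=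
  LinearMap.toContinuousLinearMap (Matrix.diagonalLinearMap (Fin n) ℝ ℝ)

@[simp] theorem dg_coe : ⇑(dg n) = (Matrix.diagonal : (Fin n → ℝ) → Matrix (Fin n) (Fin n) ℝ) := by
  funext d
  simp [dg]

theorem diag_single (k : Fin n) :
    diagonal (Pi.single k (1:ℝ)) = single k k 1 := by
  ext i j
  simp only [Matrix.diagonal_apply, Matrix.single, Matrix.of_apply, Pi.single_apply]
  by_cases h1 : i = j
  · subst h1
    by_cases h2 : k = i <;> simp [h2, eq_comm]
  · have h2 : ¬(k = i ∧ k = j) := fun ⟨a, b⟩ => h1 (a.symm.trans b)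
    simp [h1, h2]

theorem fd1 {Ψ : Set Mtx} (hΨ : IsOpen Ψ) {F : Mtx → ℝ} (hF : ContDiffOn ℝ 2 F Ψ)
    {f : (Fin n → ℝ) → ℝ} (hFf : ∀ μ, diagonal μ ∈ Ψ → F (diagonal μ) = f μ)
    {κ : Fin n → ℝ} (hA : diagonal κ ∈ Ψ) (p : Fin n) :
    fderiv ℝ f κ (Pi.single p 1)
      = fderiv ℝ F (diagonal κ) (single p p 1) := by
  have hΩ : IsOpen {μ : Fin n → ℝ | diagonal μ ∈ Ψ} := by
    have := hΨ.preimage (dg n).continuous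
    rwa [dg_coe] at this
  have hev : f =ᶠ[𝓝 κ] fun μ => F (diagonal μ) := by
    filter_upwards [hΩ.mem_nhds hA] with μ hμ
    exact (hFf μ hμ).symm
  have hFd : HasFDerivAt F (fderiv ℝ F (diagonal κ)) (diagonal κ) :=
    ((hF.contDiffAt (hΨ.mem_nhds hA)).differentiableAt two_ne_zero).hasFDerivAt
  have hcomp : HasFDerivAt (fun μ => F (diagonal μ))
      ((fderiv ℝ F (diagonal κ)).comp (dg n)) κ := by
    have h0 := (dg n).hasFDerivAt (x := κ)
    rw [dg_coe] at h0
    exact hFd.comp κ h0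
  rw [hev.fderiv_eq, hcomp.fderiv]
  simp [diag_single]

theorem fd2 {Ψ : Set Mtx} (hΨ : IsOpen Ψ) {F : Mtx → ℝ} (hF : ContDiffOn ℝ 2 F Ψ)
    {f : (Fin n → ℝ) → ℝ} (hFf : ∀ μ, diagonal μ ∈ Ψ → F (diagonal μ) = f μ)
    {κ : Fin n → ℝ} (hA : diagonal κ ∈ Ψ) (j k : Fin n) :
    fderiv ℝ (fun μ => fderiv ℝ f μ (Pi.single k 1)) κ (Pi.single j 1)
      = fderiv ℝ (fderiv ℝ F) (diagonal κ) (single j j 1)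
          (single k k 1) := by
  have hΩ : IsOpen {μ : Fin n → ℝ | diagonal μ ∈ Ψ} := by
    have := hΨ.preimage (dg n).continuous
    rwa [dg_coe] at this
  have hev : (fun μ => fderiv ℝ f μ (Pi.single k 1))
      =ᶠ[𝓝 κ] fun μ => fderiv ℝ F (diagonal μ) (single k k 1) := by
    filter_upwards [hΩ.mem_nhds hA] with μ hμ
    exact fd1 hΨ hF hFf hμ k
  rw [Filter.EventuallyEq.fderiv_eq hev]
  have hΦd : HasFDerivAt (fderiv ℝ F) (fderiv ℝ (fderiv ℝ F) (diagonal κ)) (diagonal κ) :=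
    (((hF.contDiffAt (hΨ.mem_nhds hA)).fderiv_right
      (m := 1) (by norm_num)).differentiableAt one_ne_zero).hasFDerivAt
  have hc : HasFDerivAt (fun μ => fderiv ℝ F (diagonal μ))
      ((fderiv ℝ (fderiv ℝ F) (diagonal κ)).comp (dg n)) κ := by
    have h0 := (dg n).hasFDerivAt (x := κ)
    rw [dg_coe] at h0
    exact hΦd.comp κ h0
  have hfin := hc.clm_apply (hasFDerivAt_const (single k k (1:ℝ)) κ)
  erw [hfin.fderiv]
  simp [diag_single]
  erw [ContinuousLinearMap.comp_zero, ContinuousLinearMap.zero_apply, zero_add, ContinuousLinearMap.flip_apply, ContinuousLinearMap.comp_apply, dg_coe, diag_single]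
  rfl

theorem Et (a b : Fin n) : (single a b (1:ℝ))ᵀ = single b a 1 := by
  ext i j
  simp [Matrix.transpose_apply, Matrix.single, and_comm]

theorem dE (κ : Fin n → ℝ) (a b : Fin n) :
    diagonal κ * single a b (1:ℝ) = κ a • single a b 1 := by
  ext i j
  rw [Matrix.diagonal_mul, Matrix.smul_apply]
  simp only [Matrix.single, Matrix.of_apply, smul_eq_mul, mul_ite, mul_one, mul_zero]
  split_ifs with h
  · rw [h.1]
  · rfl

theorem Ed (κ : Fin n → ℝ) (a b : Fin n) :
    single a b (1:ℝ) * diagonal κ = κ b • single a b 1 := by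
  ext i j
  rw [Matrix.mul_diagonal, Matrix.smul_apply]
  simp only [Matrix.single, Matrix.of_apply, smul_eq_mul, ite_mul, one_mul, zero_mul,
    mul_ite, mul_one, mul_zero]
  split_ifs with h
  · rw [h.2]
  · rfl

section Rot

theorem mulE_ne {b c : Fin n} (a d : Fin n) (h : b ≠ c) :
    single a b (1:ℝ) * single c d 1 = 0 :=
  Matrix.single_mul_single_of_ne (c := (1:ℝ)) a b c h 1

theorem mulE_same (a b c : Fin n) :
    single a b (1:ℝ) * single b c 1 = single a c 1 := by
  rw [Matrix.single_mul_single_same, one_mul]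

/-- rotation in the `(p,q)` plane -/
noncomputable def rot (p q : Fin n) (s : ℝ) : Matrix (Fin n) (Fin n) ℝ :=
  1 + (Real.cos s - 1) • (single p p 1 + single q q 1)
    + Real.sin s • (single p q 1 - single q p 1)

/-- the conjugated curve -/
noncomputable def rcurve (κ : Fin n → ℝ) (p q : Fin n) (s : ℝ) : Matrix (Fin n) (Fin n) ℝ :=
  diagonal κ
    + ((κ q - κ p) * Real.sin s ^ 2) • (single p p 1 - single q q 1)
    + ((κ p - κ q) * (Real.sin s * Real.cos s)) • (single p q 1 + single q p 1)

theorem rot_orth {p q : Fin n} (hpq : p ≠ q) (s : ℝ) : (rot p q s)ᵀ * rot p q s = 1 := by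
  have h1 := Real.sin_sq_add_cos_sq s
  unfold rot
  simp only [Matrix.transpose_add, Matrix.transpose_smul, Matrix.transpose_one,
    Matrix.transpose_sub, Et]
  simp only [mul_add, add_mul, sub_mul, mul_sub, Matrix.smul_mul, Matrix.mul_smul,
    one_mul, mul_one, mulE_same, mulE_ne _ _ hpq, mulE_ne _ _ hpq.symm,
    smul_zero, add_zero, zero_add, sub_zero, zero_sub]
  match_scalars <;> first | ring1 | linear_combination h1 | linear_combination -h1

theorem rot_conj (κ : Fin n → ℝ) {p q : Fin n} (hpq : p ≠ q) (s : ℝ) :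
    (rot p q s)ᵀ * diagonal κ * rot p q s = rcurve κ p q s := by
  have h1 := Real.sin_sq_add_cos_sq s
  unfold rot rcurve
  simp only [Matrix.transpose_add, Matrix.transpose_smul, Matrix.transpose_one,
    Matrix.transpose_sub, Et]
  simp only [mul_add, add_mul, sub_mul, mul_sub, Matrix.smul_mul, Matrix.mul_smul,
    one_mul, mul_one, dE, Ed, smul_smul, mulE_same, mulE_ne _ _ hpq, mulE_ne _ _ hpq.symm,
    smul_zero, add_zero, zero_add, sub_zero, zero_sub]
  match_scalars <;>
    first
      | ring1
      | linear_combination h1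
      | linear_combination -h1
      | linear_combination κ p * h1
      | linear_combination -(κ p) * h1
      | linear_combination κ q * h1
      | linear_combination -(κ q) * h1
      | linear_combination (κ p - κ q) * h1
      | linear_combination (κ q - κ p) * h1
      | linear_combination (2 * κ q - κ p) * h1
      | linear_combination (2 * κ p - κ q) * h1
      | linear_combination (κ p - 2 * κ q) * h1
      | linear_combination (κ q - 2 * κ p) * h1
      | linear_combination (κ p + κ q) * h1
      | linear_combination (-(κ p) - κ q) * h1

theorem rcurve_zero (κ : Fin n → ℝ) (p q : Fin n) : rcurve κ p q 0 = diagonal κ := by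
  unfold rcurve
  simp

theorem rcurve_contDiff (κ : Fin n → ℝ) (p q : Fin n) : ContDiff ℝ 2 (rcurve κ p q) := by
  unfold rcurve
  have hs : ContDiff ℝ 2 Real.sin := Real.contDiff_sin.of_le le_top
  have hc : ContDiff ℝ 2 Real.cos := Real.contDiff_cos.of_le le_top
  exact (contDiff_const.add ((contDiff_const.mul (hs.pow 2)).smul contDiff_const)).add
    ((contDiff_const.mul (hs.mul hc)).smul contDiff_const)

theorem Hrot {Ψ : Set Mtx} (hΨ : IsOpen Ψ) {F : Mtx → ℝ} (hF : ContDiffOn ℝ 2 F Ψ)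
    (hΨinv : ∀ M ∈ Ψ, ∀ Q : Mtx, Qᵀ * Q = 1 → Qᵀ * M * Q ∈ Ψ)
    (hFinv : ∀ M ∈ Ψ, ∀ Q : Mtx, Qᵀ * Q = 1 → F (Qᵀ * M * Q) = F M)
    {κ : Fin n → ℝ} (hA : diagonal κ ∈ Ψ) {p q : Fin n} (hpq : p ≠ q) (hκ : κ p ≠ κ q) :
    fderiv ℝ (fderiv ℝ F) (diagonal κ)
        (single p q (1:ℝ) + single q p 1)
        (single p q (1:ℝ) + single q p 1)
      = 2 * (fderiv ℝ F (diagonal κ) (single p p 1)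
          - fderiv ℝ F (diagonal κ) (single q q 1)) / (κ p - κ q) := by
  set U : Mtx := single p p 1 - single q q 1 with hU
  set V : Mtx := single p q (1:ℝ) + single q p 1 with hV
  -- the composed function is constant
  have hconst : (fun s => F (rcurve κ p q s)) = fun _ => F (diagonal κ) := by
    funext s
    rw [← rot_conj κ hpq s, hFinv _ hA _ (rot_orth hpq s)]
  have hmem : rcurve κ p q 0 ∈ Ψ := by rw [rcurve_zero]; exact hA
  -- scalar derivatives
  have hs2 : ∀ s : ℝ, HasDerivAt (fun s => Real.sin s ^ 2)
      (2 * Real.sin s * Real.cos s) s := by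
    intro s
    have := (Real.hasDerivAt_sin s).pow 2
    norm_num at this
    exact this.congr_deriv (by ring)
  have hsc : ∀ s : ℝ, HasDerivAt (fun s => Real.sin s * Real.cos s)
      (Real.cos s * Real.cos s - Real.sin s * Real.sin s) s := by
    intro s
    have := (Real.hasDerivAt_sin s).mul (Real.hasDerivAt_cos s)
    exact this.congr_deriv (by ring)
  -- first derivative of the curve
  have hMd : ∀ s : ℝ, HasDerivAt (rcurve κ p q)
      (((κ q - κ p) * (2 * Real.sin s * Real.cos s)) • U
        + ((κ p - κ q) * (Real.cos s * Real.cos s - Real.sin s * Real.sin s)) • V) s := by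
    intro s
    exact ((((hs2 s).const_mul (κ q - κ p)).smul_const U).const_add (diagonal κ)).add
      (((hsc s).const_mul (κ p - κ q)).smul_const V)
  have hder : deriv (rcurve κ p q) = fun s =>
      ((κ q - κ p) * (2 * Real.sin s * Real.cos s)) • U
        + ((κ p - κ q) * (Real.cos s * Real.cos s - Real.sin s * Real.sin s)) • V :=
    funext fun s => (hMd s).deriv
  -- second derivative of the curve at 0
  have hscc : HasDerivAt (fun s => Real.cos s * Real.cos s - Real.sin s * Real.sin s)
      (-(4 * (Real.sin 0 * Real.cos 0))) 0 := by
    have := ((Real.hasDerivAt_cos 0).mul (Real.hasDerivAt_cos 0)).sub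
      ((Real.hasDerivAt_sin 0).mul (Real.hasDerivAt_sin 0))
    exact this.congr_deriv (by ring)
  have hssc : HasDerivAt (fun s => 2 * Real.sin s * Real.cos s)
      (2 * (Real.cos 0 * Real.cos 0 - Real.sin 0 * Real.sin 0)) 0 := by
    have := ((hsc 0).const_mul 2)
    exact this.congr_of_eventuallyEq (Filter.Eventually.of_forall fun x => by ring)
  have hM2 : HasDerivAt (deriv (rcurve κ p q))
      (((κ q - κ p) * (2 * (Real.cos 0 * Real.cos 0 - Real.sin 0 * Real.sin 0))) • U
        + ((κ p - κ q) * (-(4 * (Real.sin 0 * Real.cos 0)))) • V) 0 := by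
    rw [hder]
    exact (((hssc.const_mul (κ q - κ p)).smul_const U)).add
      ((hscc.const_mul (κ p - κ q)).smul_const V)
  have h2 := curve2 hΨ hF (rcurve_contDiff κ p q) hmem
  rw [hconst] at h2
  simp only [deriv_const'] at h2
  rw [rcurve_zero] at h2
  have hd1 : deriv (rcurve κ p q) 0 = (κ p - κ q) • V := by
    rw [hder]; simp
  have hd2 : deriv (deriv (rcurve κ p q)) 0 = (2 * (κ q - κ p)) • U := by
    erw [hM2.deriv]; simp; ring_nf
  rw [hd1, hd2] at h2
  set x := fderiv ℝ F (diagonal κ) (single p p 1) with hx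
  set y := fderiv ℝ F (diagonal κ) (single q q 1) with hy
  have hUxy : fderiv ℝ F (diagonal κ) U = x - y := by rw [hU, map_sub]
  rw [_root_.map_smul, _root_.map_smul, _root_.map_smul, ContinuousLinearMap.smul_apply,
    hUxy, smul_eq_mul, smul_eq_mul, smul_eq_mul] at h2
  have ha := sub_ne_zero.mpr hκ
  rw [eq_div_iff ha]
  apply mul_left_cancel₀ ha
  linear_combination -h2

end Rot

theorem Eapp (a b i j : Fin n) :
    single a b (1:ℝ) i j = if a = i ∧ b = j then 1 else 0 := rfl

theorem Bdecomp {B : Mtx} (hB : B.IsSymm) :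
    B = (∑ j, B j j • single j j (1:ℝ))
      + ∑ p ∈ Finset.univ.filter (fun p : Fin n × Fin n => p.1 < p.2),
          B p.1 p.2 • (single p.1 p.2 (1:ℝ) + single p.2 p.1 1) := by
  have hBs : ∀ i j, B j i = B i j := fun i j => by
    conv_lhs => rw [← hB]
    rw [Matrix.transpose_apply]
  ext i j
  rw [Matrix.add_apply, Matrix.sum_apply, Matrix.sum_apply]
  by_cases hij : i = j
  · subst hij
    rw [Finset.sum_eq_single i
      (fun k _ hk => by simp [Matrix.smul_apply, Eapp, hk])
      (fun h => absurd (Finset.mem_univ i) h)]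
    rw [Finset.sum_eq_zero (fun r hr => ?_)]
    · simp [Matrix.smul_apply, Eapp]
    · have hr' : r.1 < r.2 := (Finset.mem_filter.mp hr).2
      have h1 : ¬(r.1 = i ∧ r.2 = i) := fun ⟨h1, h2⟩ => hr'.ne (h1.trans h2.symm)
      have h2 : ¬(r.2 = i ∧ r.1 = i) := fun ⟨h1, h2⟩ => hr'.ne (h2.trans h1.symm)
      simp [Matrix.smul_apply, Matrix.add_apply, Eapp, h1, h2]
  · rw [Finset.sum_eq_zero (fun k _ => by
      have : ¬(k = i ∧ k = j) := fun ⟨h1, h2⟩ => hij (h1.symm.trans h2)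
      simp [Matrix.smul_apply, Eapp, this])]
    by_cases hlt : i < j
    · rw [Finset.sum_eq_single_of_mem (i, j) (by simp [hlt]) (fun r hr hne => ?_)]
      · have h2 : ¬(j = i ∧ i = j) := fun ⟨h1, _⟩ => hij h1.symm
        simp [Matrix.smul_apply, Matrix.add_apply, Eapp, h2]
      · have hr' : r.1 < r.2 := (Finset.mem_filter.mp hr).2
        have h1 : ¬(r.1 = i ∧ r.2 = j) := fun ⟨h1, h2⟩ => hne (Prod.ext h1 h2)
        have h2 : ¬(r.2 = i ∧ r.1 = j) := fun ⟨h1, h2⟩ => by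
          rw [h1, h2] at hr'
          exact absurd hlt (asymm hr')
        simp [Matrix.smul_apply, Matrix.add_apply, Eapp, h1, h2]
    · have hgt : j < i := lt_of_le_of_ne (not_lt.mp hlt) (Ne.symm hij)
      rw [Finset.sum_eq_single_of_mem (j, i) (by simp [hgt]) (fun r hr hne => ?_)]
      · have h1 : ¬(j = i ∧ i = j) := fun ⟨h1, _⟩ => hij h1.symm
        simp [Matrix.smul_apply, Matrix.add_apply, Eapp, h1, hBs]
      · have hr' : r.1 < r.2 := (Finset.mem_filter.mp hr).2
        have h1 : ¬(r.1 = i ∧ r.2 = j) := fun ⟨ha, hb⟩ => by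
          rw [ha, hb] at hr'
          exact absurd hr' hlt
        have h2 : ¬(r.2 = i ∧ r.1 = j) := fun ⟨ha, hb⟩ => hne (Prod.ext hb ha)
        simp [Matrix.smul_apply, Matrix.add_apply, Eapp, h1, h2]

theorem Happ_sum (G : Mtx →L[ℝ] ℝ) {ι : Type*} (t : Finset ι) (b : ι → ℝ) (Y : ι → Mtx) :
    G (∑ j ∈ t, b j • Y j) = ∑ j ∈ t, b j * G (Y j) := by
  rw [map_sum]
  exact Finset.sum_congr rfl fun j _ => by rw [_root_.map_smul, smul_eq_mul]

theorem Hexpand (H : Mtx →L[ℝ] Mtx →L[ℝ] ℝ) {ι₁ ι₂ : Type*} (s : Finset ι₁) (t : Finset ι₂)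
    (a : ι₁ → ℝ) (b : ι₂ → ℝ) (X : ι₁ → Mtx) (Y : ι₂ → Mtx) :
    H (∑ i ∈ s, a i • X i) (∑ j ∈ t, b j • Y j)
      = ∑ i ∈ s, ∑ j ∈ t, a i * b j * H (X i) (Y j) := by
  have h1 : H (∑ i ∈ s, a i • X i) = ∑ i ∈ s, a i • H (X i) := by
    rw [map_sum]
    exact Finset.sum_congr rfl fun i _ => by rw [_root_.map_smul]
  rw [h1, ContinuousLinearMap.sum_apply]
  refine Finset.sum_congr rfl fun i _ => ?_
  rw [ContinuousLinearMap.smul_apply, Happ_sum, smul_eq_mul, Finset.mul_sum]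
  exact Finset.sum_congr rfl fun j _ => by ring

end Stmt17Aux

open Stmt17Aux

open Matrix in
attribute [local instance] Matrix.frobeniusNormedAddCommGroup Matrix.frobeniusNormedSpace in

theorem stmt17 (n : ℕ)
    (Ψ : Set (Matrix (Fin n) (Fin n) ℝ)) (hΨ : IsOpen Ψ)
    (F : Matrix (Fin n) (Fin n) ℝ → ℝ) (hF : ContDiffOn ℝ 2 F Ψ)
    -- `F` is orthogonally invariant (a symmetric function of matrices)
    (hΨinv : ∀ M ∈ Ψ, ∀ Q : Matrix (Fin n) (Fin n) ℝ, Qᵀ * Q = 1 → Qᵀ * M * Q ∈ Ψ)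
    (hFinv : ∀ M ∈ Ψ, ∀ Q : Matrix (Fin n) (Fin n) ℝ, Qᵀ * Q = 1 → F (Qᵀ * M * Q) = F M)
    -- `f` is the associated symmetric function of the eigenvalues: `F(diag κ) = f(κ)`
    (f : (Fin n → ℝ) → ℝ) (hf : ContDiff ℝ 2 f)
    (hFf : ∀ κ : Fin n → ℝ, Matrix.diagonal κ ∈ Ψ → F (Matrix.diagonal κ) = f κ)
    -- `A` is a diagonal matrix in `Ψ` with pairwise distinct eigenvalues
    (κ : Fin n → ℝ) (hκ : Function.Injective κ) (hA : Matrix.diagonal κ ∈ Ψ)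
    (B : Matrix (Fin n) (Fin n) ℝ) (hB : B.IsSymm) :
    iteratedDeriv 2 (fun t : ℝ => F (Matrix.diagonal κ + t • B)) 0
      = (∑ j : Fin n, ∑ k : Fin n,
          fderiv ℝ (fun μ => fderiv ℝ f μ (Pi.single k 1)) κ (Pi.single j 1)
            * B j j * B k k)
        + 2 * ∑ p ∈ Finset.univ.filter (fun p : Fin n × Fin n => p.1 < p.2),
            (fderiv ℝ f κ (Pi.single p.1 1) - fderiv ℝ f κ (Pi.single p.2 1))
              / (κ p.1 - κ p.2) * B p.1 p.2 ^ 2 := by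
  classical
  have hit : iteratedDeriv 2 (fun t : ℝ => F (Matrix.diagonal κ + t • B)) 0
      = deriv (deriv (fun t : ℝ => F (Matrix.diagonal κ + t • B))) 0 := by
    rw [iteratedDeriv_succ, iteratedDeriv_one]
  rw [hit, line2 hΨ hF hA B]
  set H := fderiv ℝ (fderiv ℝ F) (Matrix.diagonal κ) with hHdef
  have hDO := Bdecomp hB
  set D := ∑ j : Fin n, B j j • single j j (1:ℝ) with hD
  set O := ∑ p ∈ Finset.univ.filter (fun p : Fin n × Fin n => p.1 < p.2),
      B p.1 p.2 • (single p.1 p.2 (1:ℝ) + single p.2 p.1 1) with hO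
  have hsplit : H B B = H D D + H D O + (H O D + H O O) := by
    conv_lhs => rw [hDO]
    rw [map_add, H.map_add D O, ContinuousLinearMap.add_apply, ContinuousLinearMap.add_apply]
    ring
  have e1 : H D D = ∑ j : Fin n, ∑ k : Fin n, B j j * B k k
      * H (single j j 1) (single k k 1) := by
    rw [hD]
    exact Hexpand H Finset.univ Finset.univ _ _ _ _
  have e2 : H D O = ∑ j : Fin n,
      ∑ p ∈ Finset.univ.filter (fun p : Fin n × Fin n => p.1 < p.2), B j j * B p.1 p.2
        * H (single j j 1)
            (single p.1 p.2 (1:ℝ) + single p.2 p.1 1) := by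
    rw [hD, hO]
    exact Hexpand H Finset.univ _ _ _ _ _
  have e3 : H O D = ∑ p ∈ Finset.univ.filter (fun p : Fin n × Fin n => p.1 < p.2),
      ∑ j : Fin n, B p.1 p.2 * B j j
        * H (single p.1 p.2 (1:ℝ) + single p.2 p.1 1)
            (single j j 1) := by
    rw [hD, hO]
    exact Hexpand H _ Finset.univ _ _ _ _
  have e4 : H O O = ∑ p ∈ Finset.univ.filter (fun p : Fin n × Fin n => p.1 < p.2),
      ∑ r ∈ Finset.univ.filter (fun p : Fin n × Fin n => p.1 < p.2),
        B p.1 p.2 * B r.1 r.2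
        * H (single p.1 p.2 (1:ℝ) + single p.2 p.1 1)
            (single r.1 r.2 (1:ℝ) + single r.2 r.1 1) := by
    rw [hO]
    exact Hexpand H _ _ _ _ _ _
  have h10 : ∑ j : Fin n,
      ∑ p ∈ Finset.univ.filter (fun p : Fin n × Fin n => p.1 < p.2), B j j * B p.1 p.2
        * H (single j j 1)
            (single p.1 p.2 (1:ℝ) + single p.2 p.1 1) = 0 :=
    Finset.sum_eq_zero fun j _ => Finset.sum_eq_zero fun p hp => by
      rw [hHdef, Hzero1 hΨ hF hFinv hA j p.1 p.2 ((Finset.mem_filter.mp hp).2.ne), mul_zero]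
  have h01 : ∑ p ∈ Finset.univ.filter (fun p : Fin n × Fin n => p.1 < p.2),
      ∑ j : Fin n, B p.1 p.2 * B j j
        * H (single p.1 p.2 (1:ℝ) + single p.2 p.1 1)
            (single j j 1) = 0 :=
    Finset.sum_eq_zero fun p hp => Finset.sum_eq_zero fun j _ => by
      rw [hHdef, Hsymm hΨ hF hA,
        Hzero1 hΨ hF hFinv hA j p.1 p.2 ((Finset.mem_filter.mp hp).2.ne), mul_zero]
  have hOO : ∑ p ∈ Finset.univ.filter (fun p : Fin n × Fin n => p.1 < p.2),
      ∑ r ∈ Finset.univ.filter (fun p : Fin n × Fin n => p.1 < p.2),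
        B p.1 p.2 * B r.1 r.2
        * H (single p.1 p.2 (1:ℝ) + single p.2 p.1 1)
            (single r.1 r.2 (1:ℝ) + single r.2 r.1 1)
      = ∑ p ∈ Finset.univ.filter (fun p : Fin n × Fin n => p.1 < p.2),
          B p.1 p.2 * B p.1 p.2
          * H (single p.1 p.2 (1:ℝ) + single p.2 p.1 1)
              (single p.1 p.2 (1:ℝ) + single p.2 p.1 1) :=
    Finset.sum_congr rfl fun p hp => by
      refine Finset.sum_eq_single_of_mem p hp (fun r hr hne => ?_)
      have hner : (p.1, p.2) ≠ (r.1, r.2) := by simpa using hne.symm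
      rw [hHdef, Hzero2 hΨ hF hFinv hA (Finset.mem_filter.mp hp).2
        (Finset.mem_filter.mp hr).2 hner, mul_zero]
  rw [hsplit, e1, e2, e3, e4, h10, h01, hOO, add_zero, zero_add]
  congr 1
  · refine Finset.sum_congr rfl fun j _ => Finset.sum_congr rfl fun k _ => ?_
    rw [hHdef, fd2 hΨ hF hFf hA j k]
    ring
  · rw [Finset.mul_sum]
    refine Finset.sum_congr rfl fun p hp => ?_
    have hp2 : p.1 < p.2 := (Finset.mem_filter.mp hp).2
    have hκp : κ p.1 ≠ κ p.2 := fun h => hp2.ne (hκ h)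
    rw [hHdef, Hrot hΨ hF hΨinv hFinv hA hp2.ne hκp, fd1 hΨ hF hFf hA p.1,
      fd1 hΨ hF hFf hA p.2]
    ring
end
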